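/- arXiv:2107.07792 — 3 statements merged into one kernel-verified Lean document; each statement's English description precedes it below -/
import Mathlib

section
/- Let Q be a line segment (a curve t ↦ (1−t)a + tb) and P a polygonal curve with d_F(P,Q) ≤ δ. Let P' be the polygonal curve formed from any subsequence of the vertex sequence of P that includes the first and last vertex of P. Then d_F(P', Q) ≤ δ. -/
/-- Continuous Fréchet distance between curves on the unit interval. -/
noncomputable def frechetDist {E : Type*} [PseudoMetricSpace E] (P Q : unitInterval → E) : ℝ :=
  sInf {r : ℝ | ∃ f g : unitInterval → unitInterval,
    Continuous f ∧ Monotone f ∧ Function.Surjective f ∧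
    Continuous g ∧ Monotone g ∧ Function.Surjective g ∧
    ∀ t, dist (P (f t)) (Q (g t)) ≤ r}

/-- The directed line segment from `a` to `b`, parametrized linearly. -/
noncomputable def segCurve {E : Type*} [AddCommGroup E] [Module ℝ E] (a b : E) :
    unitInterval → E :=
  fun t => (1 - (t : ℝ)) • a + (t : ℝ) • b

/-- The polygonal curve with `n+1` vertices `p 0, …, p n`, parametrized uniformly. -/
noncomputable def polyCurve {E : Type*} [AddCommGroup E] [Module ℝ E]
    (n : ℕ) (p : Fin (n + 1) → E) (t : unitInterval) : E :=
  let x : ℝ := (t : ℝ) * n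
  let i : ℕ := min (Nat.floor x) (n - 1)
  (1 - (x - (i : ℝ))) • p ⟨min i n, Nat.lt_succ_of_le (min_le_right i n)⟩ +
    (x - (i : ℝ)) • p ⟨min (i + 1) n, Nat.lt_succ_of_le (min_le_right (i + 1) n)⟩

/-- The subcurve `Q[a,b]`, linearly reparametrized over the unit interval. -/
noncomputable def subcurve {E : Type*} (Q : unitInterval → E) (a b : unitInterval) :
    unitInterval → E :=
  fun s => Q ⟨(1 - (s : ℝ)) * (a : ℝ) + (s : ℝ) * (b : ℝ), Set.mem_Icc.mpr ⟨by
      have hs0 := unitInterval.nonneg s; have hs1 := unitInterval.le_one s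
      have ha0 := unitInterval.nonneg a; have hb0 := unitInterval.nonneg b
      have h1 : (0:ℝ) ≤ (1 - (s:ℝ)) * (a:ℝ) := mul_nonneg (by linarith) ha0
      have h2 : (0:ℝ) ≤ (s:ℝ) * (b:ℝ) := mul_nonneg hs0 hb0
      linarith, by
      have hs0 := unitInterval.nonneg s; have hs1 := unitInterval.le_one s
      have ha1 := unitInterval.le_one a; have hb1 := unitInterval.le_one b
      have h1 : (1 - (s:ℝ)) * (a:ℝ) ≤ (1 - (s:ℝ)) * 1 :=
        mul_le_mul_of_nonneg_left ha1 (by linarith)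
      have h2 : (s:ℝ) * (b:ℝ) ≤ (s:ℝ) * 1 := mul_le_mul_of_nonneg_left hb1 hs0
      linarith⟩⟩

/-- The parameter (in the uniform parametrization) of the `i`-th vertex of a
polygonal curve with `n` edges. -/
noncomputable def vparam (n : ℕ) (i : Fin (n + 1)) : unitInterval :=
  ⟨((i : ℕ) : ℝ) / (n : ℝ), Set.mem_Icc.mpr ⟨by positivity, by
    have h1 : ((i : ℕ) : ℝ) ≤ (n : ℝ) := by exact_mod_cast Nat.lt_succ_iff.mp i.isLt
    rcases Nat.eq_zero_or_pos n with h | h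
    · subst h; simp
    · rw [div_le_one (by exact_mod_cast h)]; exact h1⟩⟩

/-- `P` is `c`-monotone increasing. -/
def ApproxInc (c : ℝ) (P : unitInterval → ℝ) : Prop :=
  ∀ s t : unitInterval, s ≤ t → P s - c ≤ P t

/-- `P` is `c`-monotone decreasing. -/
def ApproxDec (c : ℝ) (P : unitInterval → ℝ) : Prop :=
  ∀ s t : unitInterval, s ≤ t → P t ≤ P s + c

/-- `P` is `c`-monotone. -/
def ApproxMono (c : ℝ) (P : unitInterval → ℝ) : Prop :=
  ApproxInc c P ∨ ApproxDec c P

/-- Concatenation of two curves (first on `[0,1/2]`, second on `[1/2,1]`). -/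
noncomputable def concatC {E : Type*} (P Q : unitInterval → E) : unitInterval → E :=
  fun t =>
    if h : (t : ℝ) ≤ 1 / 2 then
      P ⟨2 * (t : ℝ), Set.mem_Icc.mpr ⟨by have := unitInterval.nonneg t; linarith,
        by linarith⟩⟩
    else
      Q ⟨2 * (t : ℝ) - 1, Set.mem_Icc.mpr ⟨by push_neg at h; linarith,
        by have := unitInterval.le_one t; linarith⟩⟩

/-- The data of a `δ`-straightening of the curve `Q`: parameters
`0 = t 0 < … < t (Fin.last ℓ) = 1` such that each shortcut segment is within
Fréchet distance `δ` of the corresponding subcurve (locality), and each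
corresponding subcurve stays in the closed interval spanned by the shortcut's
endpoints (edge-range-preserving). -/
def StraighteningData (δ : ℝ) (Q : unitInterval → ℝ) (ℓ : ℕ)
    (t : Fin (ℓ + 1) → unitInterval) : Prop :=
  StrictMono t ∧ t 0 = 0 ∧ t (Fin.last ℓ) = 1 ∧
    ∀ i : Fin ℓ,
      frechetDist (segCurve (Q (t i.castSucc)) (Q (t i.succ)))
          (subcurve Q (t i.castSucc) (t i.succ)) ≤ δ ∧
      ∀ s : unitInterval, t i.castSucc ≤ s → s ≤ t i.succ →
        Q s ∈ Set.uIcc (Q (t i.castSucc)) (Q (t i.succ))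

/-- `Q'` is a `δ`-straightening of `Q`. -/
def IsStraightening (δ : ℝ) (Q Q' : unitInterval → ℝ) : Prop :=
  ∃ (ℓ : ℕ) (t : Fin (ℓ + 1) → unitInterval),
    StraighteningData δ Q ℓ t ∧ Q' = polyCurve ℓ (fun i => Q (t i))

/-- The data of a `δ`-signature of the curve `Q`: parameters
`0 = t 0 < … < t (Fin.last ℓ) = 1` with the locality property, non-degenerate
vertex-range-preserving interior vertices, and the `δ`-edge-length property. -/
def SignatureData (δ : ℝ) (Q : unitInterval → ℝ) (ℓ : ℕ)
    (t : Fin (ℓ + 1) → unitInterval) : Prop :=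
  StrictMono t ∧ t 0 = 0 ∧ t (Fin.last ℓ) = 1 ∧
    (∀ i : Fin ℓ,
      frechetDist (segCurve (Q (t i.castSucc)) (Q (t i.succ)))
          (subcurve Q (t i.castSucc) (t i.succ)) ≤ δ) ∧
    (∀ i : ℕ, ∀ _h1 : 0 < i, ∀ _h2 : i < ℓ,
      (Q (t ⟨i - 1, by omega⟩) < Q (t ⟨i, by omega⟩) ∧
        Q (t ⟨i + 1, by omega⟩) < Q (t ⟨i, by omega⟩) ∧
        ∀ s : unitInterval, t ⟨i - 1, by omega⟩ ≤ s → s ≤ t ⟨i + 1, by omega⟩ →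
          Q s ≤ Q (t ⟨i, by omega⟩)) ∨
      (Q (t ⟨i, by omega⟩) < Q (t ⟨i - 1, by omega⟩) ∧
        Q (t ⟨i, by omega⟩) < Q (t ⟨i + 1, by omega⟩) ∧
        ∀ s : unitInterval, t ⟨i - 1, by omega⟩ ≤ s → s ≤ t ⟨i + 1, by omega⟩ →
          Q (t ⟨i, by omega⟩) ≤ Q s)) ∧
    (∀ _h : 1 ≤ ℓ,
      δ < |Q (t ⟨1, by omega⟩) - Q (t 0)| ∧
      δ < |Q (t (Fin.last ℓ)) - Q (t ⟨ℓ - 1, by omega⟩)|) ∧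
    (∀ j : ℕ, ∀ _hj1 : 1 ≤ j, ∀ _hj2 : j + 2 ≤ ℓ,
      2 * δ < |Q (t ⟨j + 1, by omega⟩) - Q (t ⟨j, by omega⟩)|)

/-- `Q'` is a `δ`-signature of `Q`. -/
def IsSignature (δ : ℝ) (Q Q' : unitInterval → ℝ) : Prop :=
  ∃ (ℓ : ℕ) (t : Fin (ℓ + 1) → unitInterval),
    SignatureData δ Q ℓ t ∧ Q' = polyCurve ℓ (fun i => Q (t i))

/-- Vertex `j` of the polygonal curve on `q` `δ`-visits vertex `a` of the
polygonal curve on `p` under the monotone traversal `(f, g)`: they are within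
distance `δ`, and the traversal matches one of them to the other vertex or to the
interior of an edge incident to it. -/
def Visits (δ : ℝ) (m k : ℕ) (p : Fin (m + 1) → ℝ) (q : Fin (k + 1) → ℝ)
    (f g : unitInterval → unitInterval) (j : Fin (k + 1)) (a : Fin (m + 1)) : Prop :=
  |q j - p a| ≤ δ ∧
    ((∃ t : unitInterval, g t = vparam k j ∧ |(f t : ℝ) * (m : ℝ) - ((a : ℕ) : ℝ)| < 1) ∨
     (∃ t : unitInterval, f t = vparam m a ∧ |(g t : ℝ) * (k : ℝ) - ((j : ℕ) : ℝ)| < 1))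

section AuxShortcut

noncomputable def clampR (y : ℝ) : ℝ := max 0 (min 1 y)

lemma clampR_mono : Monotone clampR :=
  fun _ _ h => max_le_max le_rfl (min_le_min le_rfl h)

lemma continuous_clampR : Continuous clampR := by
  unfold clampR; fun_prop

lemma clampR_of_nonpos {y : ℝ} (h : y ≤ 0) : clampR y = 0 := by
  unfold clampR; rw [min_eq_right (h.trans zero_le_one), max_eq_left h]

lemma clampR_of_one_le {y : ℝ} (h : 1 ≤ y) : clampR y = 1 := by
  unfold clampR; rw [min_eq_left h, max_eq_right zero_le_one]

lemma clampR_of_mem {y : ℝ} (h0 : 0 ≤ y) (h1 : y ≤ 1) : clampR y = y := by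
  unfold clampR; rw [min_eq_right h1, max_eq_right h0]

variable {E : Type*}

noncomputable def vtx [AddCommGroup E] [Module ℝ E] (n : ℕ) (p : Fin (n+1) → E) (k : ℕ) : E :=
  p ⟨min k n, Nat.lt_succ_of_le (min_le_right k n)⟩

lemma vtx_zero [AddCommGroup E] [Module ℝ E] (n : ℕ) (p : Fin (n+1) → E) : vtx n p 0 = p 0 := by
  unfold vtx; congr 1

lemma vtx_of_le [AddCommGroup E] [Module ℝ E] (n : ℕ) (p : Fin (n+1) → E) {k : ℕ} (h : k ≤ n)
    (hk : k < n + 1) : vtx n p k = p ⟨k, hk⟩ := by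
  unfold vtx; congr 1; exact Fin.ext (by simp [min_eq_left h])

lemma polyCurve_apply [AddCommGroup E] [Module ℝ E] (n : ℕ) (p : Fin (n+1) → E)
    (t : unitInterval) :
    polyCurve n p t =
      (1 - ((t:ℝ)*n - ((min (Nat.floor ((t:ℝ)*n)) (n-1) : ℕ) : ℝ))) •
          vtx n p (min (Nat.floor ((t:ℝ)*n)) (n-1)) +
        ((t:ℝ)*n - ((min (Nat.floor ((t:ℝ)*n)) (n-1) : ℕ) : ℝ)) •
          vtx n p (min (Nat.floor ((t:ℝ)*n)) (n-1) + 1) := rfl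

lemma poly_idx_le (n : ℕ) (t : unitInterval) :
    ((min (Nat.floor ((t:ℝ)*n)) (n-1) : ℕ) : ℝ) ≤ (t:ℝ) * n ∧
      (t:ℝ) * n ≤ ((min (Nat.floor ((t:ℝ)*n)) (n-1) : ℕ) : ℝ) + 1 := by
  have hx0 : (0:ℝ) ≤ (t:ℝ) * n := mul_nonneg t.2.1 (Nat.cast_nonneg n)
  have hxn : (t:ℝ) * n ≤ n := mul_le_of_le_one_left (Nat.cast_nonneg n) t.2.2
  rcases Nat.eq_zero_or_pos n with h | h
  · subst h
    simp only [Nat.cast_zero, mul_zero] at *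
    norm_num
  · by_cases hf : Nat.floor ((t:ℝ)*n) ≤ n - 1
    · rw [min_eq_left hf]
      exact ⟨Nat.floor_le hx0, (Nat.lt_floor_add_one _).le⟩
    · push_neg at hf
      have h1 : n ≤ Nat.floor ((t:ℝ)*n) := by omega
      have h2 : (n:ℝ) ≤ (t:ℝ)*n := (Nat.le_floor_iff hx0).mp h1
      rw [min_eq_right (by omega : n - 1 ≤ Nat.floor ((t:ℝ)*n))]
      rw [Nat.cast_sub h]
      constructor <;> push_cast <;> linarith

lemma polyCurve_eq_sum [AddCommGroup E] [Module ℝ E] (n : ℕ) (p : Fin (n+1) → E)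
    (t : unitInterval) :
    polyCurve n p t = vtx n p 0 +
      ∑ j ∈ Finset.range n, clampR ((t:ℝ) * n - j) • (vtx n p (j+1) - vtx n p j) := by
  obtain ⟨h1, h2⟩ := poly_idx_le n t
  rw [polyCurve_apply]
  rcases Nat.eq_zero_or_pos n with h | h
  · subst h
    simp [vtx]
  · set x : ℝ := (t:ℝ) * n with hx
    set i : ℕ := min (Nat.floor x) (n-1) with hi
    have hin : i + 1 ≤ n := by
      have : i ≤ n - 1 := min_le_right _ _
      omega
    have hvanish : ∀ j ∈ Finset.range n, j ∉ Finset.range (i+1) →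
        clampR (x - j) • (vtx n p (j+1) - vtx n p j) = 0 := by
      intro j _ hj
      simp only [Finset.mem_range, not_lt] at hj
      have : x - j ≤ 0 := by
        have h' : ((i:ℝ)) + 1 ≤ j := by exact_mod_cast hj
        linarith
      rw [clampR_of_nonpos this, zero_smul]
    rw [← Finset.sum_subset (Finset.range_subset_range.mpr hin) hvanish]
    rw [Finset.sum_range_succ]
    have hone : ∀ j ∈ Finset.range i, clampR (x - j) • (vtx n p (j+1) - vtx n p j)
        = vtx n p (j+1) - vtx n p j := by
      intro j hj
      simp only [Finset.mem_range] at hj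
      have : (1:ℝ) ≤ x - j := by
        have : ((j:ℝ)) + 1 ≤ i := by exact_mod_cast (by omega : j + 1 ≤ i)
        linarith
      rw [clampR_of_one_le this, one_smul]
    rw [Finset.sum_congr rfl hone, Finset.sum_range_sub (fun k => vtx n p k)]
    rw [clampR_of_mem (by linarith) (by linarith)]
    module

variable {E : Type*}

lemma continuous_polyCurve [NormedAddCommGroup E] [NormedSpace ℝ E] (n : ℕ)
    (p : Fin (n+1) → E) : Continuous (polyCurve n p) := by
  have h : polyCurve n p = fun t : unitInterval => vtx n p 0 + ∑ j ∈ Finset.range n,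
      clampR ((t:ℝ) * n - j) • (vtx n p (j+1) - vtx n p j) := funext (polyCurve_eq_sum n p)
  rw [h]
  refine continuous_const.add (continuous_finset_sum _ fun j _ => ?_)
  exact ((continuous_clampR.comp ((continuous_subtype_val.mul continuous_const).sub
    continuous_const))).smul continuous_const

lemma monotone_polyCurve (n : ℕ) (q : Fin (n+1) → ℝ) (hq : Monotone q) :
    Monotone (polyCurve n q) := by
  intro s t hst
  rw [polyCurve_eq_sum, polyCurve_eq_sum]
  refine add_le_add (le_refl _) (Finset.sum_le_sum fun j _ => ?_)
  have hd : 0 ≤ vtx n q (j+1) - vtx n q j := by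
    have h' : (⟨min j n, Nat.lt_succ_of_le (min_le_right j n)⟩ : Fin (n+1)) ≤
        ⟨min (j+1) n, Nat.lt_succ_of_le (min_le_right (j+1) n)⟩ :=
      Fin.mk_le_mk.mpr (by omega)
    exact sub_nonneg.mpr (hq h')
  have hcl : clampR ((s:ℝ) * n - j) ≤ clampR ((t:ℝ) * n - j) := by
    apply clampR_mono
    have : (s:ℝ) ≤ t := hst
    nlinarith [Nat.cast_nonneg (α := ℝ) n]
  simpa [smul_eq_mul] using mul_le_mul_of_nonneg_right hcl hd

lemma polyCurve_vparam [AddCommGroup E] [Module ℝ E] (n : ℕ) (p : Fin (n+1) → E)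
    (a : Fin (n+1)) : polyCurve n p (vparam n a) = p a := by
  rcases Nat.eq_zero_or_pos n with h | h
  · subst h
    rw [polyCurve_eq_sum, vtx_zero]
    simp [Fin.fin_one_eq_zero a]
  · rw [polyCurve_eq_sum]
    have hx : ((vparam n a : unitInterval) : ℝ) * n = ((a : ℕ) : ℝ) := by
      show ((a:ℕ):ℝ) / n * n = _
      field_simp
    simp only [hx]
    have ha : (a:ℕ) ≤ n := Nat.lt_succ_iff.mp a.isLt
    have hvanish : ∀ j ∈ Finset.range n, j ∉ Finset.range (a:ℕ) →
        clampR (((a:ℕ):ℝ) - j) • (vtx n p (j+1) - vtx n p j) = 0 := by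
      intro j _ hj
      simp only [Finset.mem_range, not_lt] at hj
      have h' : ((a:ℕ):ℝ) ≤ j := by exact_mod_cast hj
      rw [clampR_of_nonpos (by linarith), zero_smul]
    rw [← Finset.sum_subset (Finset.range_subset_range.mpr ha) hvanish]
    have hone : ∀ j ∈ Finset.range (a:ℕ), clampR (((a:ℕ):ℝ) - j) • (vtx n p (j+1) - vtx n p j)
        = vtx n p (j+1) - vtx n p j := by
      intro j hj
      simp only [Finset.mem_range] at hj
      have h' : ((j:ℝ)) + 1 ≤ ((a:ℕ):ℝ) := by exact_mod_cast hj
      rw [clampR_of_one_le (by linarith), one_smul]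
    rw [Finset.sum_congr rfl hone, Finset.sum_range_sub (fun k => vtx n p k), vtx_zero,
      vtx_of_le n p ha a.isLt]
    simp

lemma dist_combo_le [NormedAddCommGroup E] [NormedSpace ℝ E] {u r : ℝ}
    (hu0 : 0 ≤ u) (hu1 : u ≤ 1) {x y x' y' : E}
    (hx : dist x x' ≤ r) (hy : dist y y' ≤ r) :
    dist ((1-u) • x + u • y) ((1-u) • x' + u • y') ≤ r := by
  have key : (1-u) • x + u • y - ((1-u) • x' + u • y') = (1-u) • (x - x') + u • (y - y') := by
    module
  rw [dist_eq_norm, key]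
  rw [dist_eq_norm] at hx hy
  calc ‖(1-u) • (x - x') + u • (y - y')‖ ≤ ‖(1-u) • (x-x')‖ + ‖u • (y-y')‖ := norm_add_le _ _
    _ = (1-u) * ‖x - x'‖ + u * ‖y - y'‖ := by
        rw [norm_smul, norm_smul, Real.norm_eq_abs, Real.norm_eq_abs, abs_of_nonneg hu0,
          abs_of_nonneg (by linarith)]
    _ ≤ r := by nlinarith [norm_nonneg (x - x'), norm_nonneg (y - y')]

lemma norm_combo_le [NormedAddCommGroup E] [NormedSpace ℝ E] {u M : ℝ}
    (hu0 : 0 ≤ u) (hu1 : u ≤ 1) {x y : E} (hx : ‖x‖ ≤ M) (hy : ‖y‖ ≤ M) :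
    ‖(1-u) • x + u • y‖ ≤ M := by
  calc ‖(1-u) • x + u • y‖ ≤ ‖(1-u) • x‖ + ‖u • y‖ := norm_add_le _ _
    _ = (1-u) * ‖x‖ + u * ‖y‖ := by
        rw [norm_smul, norm_smul, Real.norm_eq_abs, Real.norm_eq_abs, abs_of_nonneg hu0,
          abs_of_nonneg (by linarith)]
    _ ≤ M := by nlinarith [norm_nonneg x, norm_nonneg y]

lemma segCurve_combo [AddCommGroup E] [Module ℝ E] (a b : E) {u : ℝ}
    (c1 c2 : unitInterval) (y : unitInterval)
    (hy : (y:ℝ) = (1-u) * (c1:ℝ) + u * (c2:ℝ)) :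
    segCurve a b y = (1-u) • segCurve a b c1 + u • segCurve a b c2 := by
  unfold segCurve
  rw [hy]; module

lemma mono_surj_endpoints {f : unitInterval → unitInterval} (hm : Monotone f)
    (hs : Function.Surjective f) : f 0 = 0 ∧ f 1 = 1 := by
  obtain ⟨t0, ht0⟩ := hs 0
  obtain ⟨t1, ht1⟩ := hs 1
  constructor
  · have h1 : f 0 ≤ f t0 := hm unitInterval.nonneg'
    rw [ht0] at h1
    exact le_antisymm h1 unitInterval.nonneg'
  · have h1 : f t1 ≤ f 1 := hm unitInterval.le_one'
    rw [ht1] at h1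
    exact le_antisymm unitInterval.le_one' h1


lemma dist_polyCurve_segCurve_le [NormedAddCommGroup E] [NormedSpace ℝ E]
    (n : ℕ) (q : Fin (n+1) → E) (c : Fin (n+1) → unitInterval) (a b : E) {r : ℝ}
    (hclose : ∀ j, dist (q j) (segCurve a b (c j)) ≤ r) (t : unitInterval)
    (y : unitInterval) (hy : (y:ℝ) = polyCurve n (fun j => ((c j : unitInterval) : ℝ)) t) :
    dist (polyCurve n q t) (segCurve a b y) ≤ r := by
  obtain ⟨h1, h2⟩ := poly_idx_le n t
  set iN : ℕ := min (Nat.floor ((t:ℝ)*n)) (n-1) with hiN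
  set j1 : Fin (n+1) := ⟨min iN n, Nat.lt_succ_of_le (min_le_right _ _)⟩ with hj1
  set j2 : Fin (n+1) := ⟨min (iN+1) n, Nat.lt_succ_of_le (min_le_right _ _)⟩ with hj2
  have hy' : (y:ℝ) = (1 - ((t:ℝ)*n - (iN:ℝ))) * ((c j1 : unitInterval) : ℝ)
      + ((t:ℝ)*n - (iN:ℝ)) * ((c j2 : unitInterval) : ℝ) := by
    rw [hy, polyCurve_apply]; rfl
  rw [polyCurve_apply, segCurve_combo a b (c j1) (c j2) y hy']
  exact dist_combo_le (by linarith) (by linarith) (hclose j1) (hclose j2)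

lemma frechet_set_bddBelow [PseudoMetricSpace E] (P Q : unitInterval → E) :
    BddBelow {r : ℝ | ∃ f g : unitInterval → unitInterval,
      Continuous f ∧ Monotone f ∧ Function.Surjective f ∧
      Continuous g ∧ Monotone g ∧ Function.Surjective g ∧
      ∀ t, dist (P (f t)) (Q (g t)) ≤ r} := by
  refine ⟨0, fun r hr => ?_⟩
  obtain ⟨f, g, _, _, _, _, _, _, hb⟩ := hr
  exact le_trans dist_nonneg (hb 0)

lemma frechet_set_nonempty [NormedAddCommGroup E] [NormedSpace ℝ E]
    (n : ℕ) (p : Fin (n+1) → E) (a b : E) :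
    Set.Nonempty {r : ℝ | ∃ f g : unitInterval → unitInterval,
      Continuous f ∧ Monotone f ∧ Function.Surjective f ∧
      Continuous g ∧ Monotone g ∧ Function.Surjective g ∧
      ∀ t, dist (polyCurve n p (f t)) (segCurve a b (g t)) ≤ r} := by
  set M : ℝ := Finset.univ.sup' Finset.univ_nonempty (fun i => ‖p i‖) with hM
  have hMB : ∀ i, ‖p i‖ ≤ M := fun i => by
    rw [hM]; exact Finset.le_sup' (fun i => ‖p i‖) (Finset.mem_univ i)
  refine ⟨M + max ‖a‖ ‖b‖, id, id, continuous_id, monotone_id, Function.surjective_id,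
    continuous_id, monotone_id, Function.surjective_id, fun t => ?_⟩
  have h1 : ‖polyCurve n p t‖ ≤ M := by
    rw [polyCurve_apply]
    obtain ⟨hl, hr⟩ := poly_idx_le n t
    exact norm_combo_le (by linarith) (by linarith) (hMB _) (hMB _)
  have h2 : ‖segCurve a b t‖ ≤ max ‖a‖ ‖b‖ := by
    show ‖(1 - (t:ℝ)) • a + (t:ℝ) • b‖ ≤ max ‖a‖ ‖b‖
    exact norm_combo_le t.2.1 t.2.2 (le_max_left ‖a‖ ‖b‖) (le_max_right ‖a‖ ‖b‖)
  calc dist (polyCurve n p (id t)) (segCurve a b (id t))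
      ≤ ‖polyCurve n p t‖ + ‖segCurve a b t‖ := dist_le_norm_add_norm _ _
    _ ≤ M + max ‖a‖ ‖b‖ := add_le_add h1 h2

end AuxShortcut

/-- If a polygonal curve `P` is within Fréchet distance `δ` of a
segment `Q`, then so is any polygonal curve `P'` on a subsequence of the vertices
of `P` that includes the first and last vertex. -/
theorem frechetDist_shortcut_le {d : ℕ} (δ : ℝ) (hδ : 0 < δ)
    (a b : EuclideanSpace ℝ (Fin d)) (m m' : ℕ)
    (p : Fin (m + 1) → EuclideanSpace ℝ (Fin d))
    (s : Fin (m' + 1) → Fin (m + 1)) (hs : StrictMono s)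
    (h0 : s 0 = 0) (hl : s (Fin.last m') = Fin.last m)
    (hP : frechetDist (polyCurve m p) (segCurve a b) ≤ δ) :
    frechetDist (polyCurve m' (p ∘ s)) (segCurve a b) ≤ δ := by
  classical
  rcases Nat.eq_zero_or_pos m' with hm' | hm'
  · subst hm'
    have hm : m = 0 := by
      have h1 := hl
      rw [show (Fin.last 0) = 0 from rfl, h0] at h1
      have h2 := congrArg Fin.val h1
      simpa using h2.symm
    subst hm
    have hpq : polyCurve 0 (p ∘ s) = polyCurve 0 p := by
      funext t
      rw [polyCurve_apply, polyCurve_apply]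
      have hv : ∀ k, vtx 0 (p ∘ s) k = vtx 0 p k := by
        intro k
        unfold vtx
        simp only [Function.comp_apply]
        refine congrArg p (Fin.ext ?_)
        omega
      rw [hv, hv]
    rwa [hpq]
  · have h01 : s 0 < s (Fin.last m') := hs (by rw [Fin.lt_def]; simpa using hm')
    rw [h0, hl] at h01
    have hm : 0 < m := by rw [Fin.lt_def] at h01; simpa using h01
    rw [frechetDist] at hP ⊢
    have hbddP := frechet_set_bddBelow (polyCurve m p) (segCurve a b)
    have hbddP' := frechet_set_bddBelow (polyCurve m' (p ∘ s)) (segCurve a b)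
    have hneP := frechet_set_nonempty m p a b
    refine le_of_forall_pos_le_add fun ε hε => ?_
    obtain ⟨r, hrS, hrlt⟩ := (Real.sInf_le_iff hbddP hneP).mp hP ε hε
    refine le_trans (csInf_le hbddP' ?_) hrlt.le
    obtain ⟨f, g, hfc, hfm, hfs, hgc, hgm, hgs, hb⟩ := hrS
    obtain ⟨hf0, hf1⟩ := mono_surj_endpoints hfm hfs
    obtain ⟨hg0, hg1⟩ := mono_surj_endpoints hgm hgs
    have hlastne : (Fin.last m') ≠ (0 : Fin (m'+1)) := by
      intro hcon
      have h2 := congrArg Fin.val hcon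
      simp [Fin.val_last] at h2
      omega
    obtain ⟨τ, hτ0, hτ1, hτmid⟩ : ∃ τ : Fin (m'+1) → unitInterval,
        τ 0 = 0 ∧ τ (Fin.last m') = 1 ∧ ∀ i, i ≠ 0 → i ≠ Fin.last m' →
          f (τ i) = vparam m (s i) := by
      refine ⟨fun i => if i = 0 then 0 else if i = Fin.last m' then 1
        else Classical.choose (hfs (vparam m (s i))), by simp, by simp [hlastne], ?_⟩
      intro i hi1 hi2
      simp only [if_neg hi1, if_neg hi2]
      exact Classical.choose_spec (hfs (vparam m (s i)))
    have hfτ : ∀ i, f (τ i) = vparam m (s i) := by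
      intro i
      by_cases hi0 : i = 0
      · subst hi0
        rw [hτ0, hf0, h0]
        exact (Subtype.ext (by simp [vparam])).symm
      · by_cases hil : i = Fin.last m'
        · subst hil
          rw [hτ1, hf1, hl]
          refine (Subtype.ext ?_).symm
          show ((Fin.last m : ℕ) : ℝ) / (m:ℝ) = (1:ℝ)
          rw [Fin.val_last, div_self (by exact_mod_cast hm.ne')]
        · exact hτmid i hi0 hil
    have hτlt : ∀ i j : Fin (m'+1), i < j → τ i < τ j := by
      intro i j hij
      by_contra hcon
      push_neg at hcon
      have h1 := hfm hcon
      rw [hfτ i, hfτ j] at h1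
      have hcast : ((s i : ℕ) : ℝ) < ((s j : ℕ) : ℝ) := by
        have h2 := hs hij
        rw [Fin.lt_def] at h2
        exact_mod_cast h2
      have h3 : vparam m (s i) < vparam m (s j) := by
        rw [Subtype.mk_lt_mk]
        exact div_lt_div_of_pos_right hcast (by exact_mod_cast hm)
      exact absurd h1 (not_le.mpr h3)
    set βR : Fin (m'+1) → ℝ := fun i => ((g (τ i) : unitInterval) : ℝ) with hβR
    have hβmono : Monotone βR := by
      intro i j hij
      rcases eq_or_lt_of_le hij with h | h
      · rw [h]
      · exact Subtype.coe_le_coe.mpr (hgm (hτlt i j h).le)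
    have hv0 : vparam m' (0 : Fin (m'+1)) = 0 := Subtype.ext (by simp [vparam])
    have hv1 : vparam m' (Fin.last m') = 1 := Subtype.ext (by
      show ((Fin.last m' : ℕ) : ℝ) / (m':ℝ) = (1:ℝ)
      rw [Fin.val_last, div_self (by exact_mod_cast hm'.ne')])
    have hmono := monotone_polyCurve m' βR hβmono
    have hP0 : polyCurve m' βR 0 = 0 := by
      rw [← hv0, polyCurve_vparam]
      show ((g (τ 0) : unitInterval) : ℝ) = 0
      rw [hτ0, hg0]
      rfl
    have hP1 : polyCurve m' βR 1 = 1 := by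
      rw [← hv1, polyCurve_vparam]
      show ((g (τ (Fin.last m')) : unitInterval) : ℝ) = 1
      rw [hτ1, hg1]
      rfl
    have hmem : ∀ t : unitInterval, polyCurve m' βR t ∈ Set.Icc (0:ℝ) 1 := by
      intro t
      constructor
      · rw [← hP0]; exact hmono unitInterval.nonneg'
      · rw [← hP1]; exact hmono unitInterval.le_one'
    set G : unitInterval → unitInterval := fun t => ⟨polyCurve m' βR t, hmem t⟩ with hG
    have hGc : Continuous G := (continuous_polyCurve m' βR).subtype_mk _
    have hGm : Monotone G := fun u v huv => Subtype.mk_le_mk.mpr (hmono huv)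
    have hGs : Function.Surjective G := by
      intro y
      have hic : Set.Icc (polyCurve m' βR 0) (polyCurve m' βR 1)
          ⊆ Set.range (polyCurve m' βR) :=
        intermediate_value_univ 0 1 (continuous_polyCurve m' βR)
      have hy : (y : ℝ) ∈ Set.Icc (polyCurve m' βR 0) (polyCurve m' βR 1) := by
        rw [hP0, hP1]; exact y.2
      obtain ⟨t, ht⟩ := hic hy
      exact ⟨t, Subtype.ext ht⟩
    refine ⟨id, G, continuous_id, monotone_id, Function.surjective_id, hGc, hGm, hGs,
      fun t => ?_⟩
    have hclose : ∀ j : Fin (m'+1), dist ((p ∘ s) j) (segCurve a b (g (τ j))) ≤ r := by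
      intro j
      have h1 := hb (τ j)
      rw [hfτ j, polyCurve_vparam] at h1
      exact h1
    exact dist_polyCurve_segCurve_le m' (p ∘ s) (fun j => g (τ j)) a b hclose t (G t) rfl
end

section
/- Let Q be a directed line segment in R with Q(0) ≤ Q(1), and let P : [0,1] → R be a continuous curve. Then d_F(P,Q) ≤ δ if and only if (i) P is 2δ-monotone increasing, i.e. for all s < t in [0,1], P(t) ≥ P(s) − 2δ; (ii) |P(0) − Q(0)| ≤ δ and |P(1) − Q(1)| ≤ δ; and (iii) every point of P lies within distance δ of some point of Q, i.e. P([0,1]) ⊆ [Q(0) − δ, Q(1) + δ]. -/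
noncomputable def runMax (P : unitInterval → ℝ) (x : ℝ) : ℝ :=
  sSup ((fun s => P (Set.projIcc 0 1 zero_le_one (min s x))) '' Set.Icc (0:ℝ) 1)

lemma continuous_runMax (P : unitInterval → ℝ) (hP : Continuous P) :
    Continuous (runMax P) := by
  have h : Continuous fun p : ℝ × ℝ => P (Set.projIcc 0 1 zero_le_one (min p.2 p.1)) :=
    hP.comp (continuous_projIcc.comp (continuous_snd.min continuous_fst))
  exact IsCompact.continuous_sSup isCompact_Icc h

lemma le_runMax (P : unitInterval → ℝ) (hP : Continuous P) (t : unitInterval) :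
    P t ≤ runMax P t := by
  apply le_csSup
  · exact isCompact_Icc.bddAbove_image
      ((hP.comp (continuous_projIcc.comp (continuous_min.comp
        (continuous_id.prodMk continuous_const)))).continuousOn)
  · refine ⟨(t : ℝ), t.2, ?_⟩
    show P (Set.projIcc 0 1 zero_le_one (min (t:ℝ) (t:ℝ))) = P t
    rw [min_self, Set.projIcc_of_mem zero_le_one t.2]

lemma runMax_le (P : unitInterval → ℝ) (t : unitInterval) (c : ℝ)
    (h : ∀ s : unitInterval, s ≤ t → P s ≤ c) : runMax P t ≤ c := by
  apply csSup_le ((Set.nonempty_Icc.mpr zero_le_one).image _)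
  rintro x ⟨s, hs, rfl⟩
  have hm : min s (t : ℝ) ∈ Set.Icc (0:ℝ) 1 :=
    ⟨le_min hs.1 t.2.1, le_trans (min_le_left _ _) hs.2⟩
  show P (Set.projIcc 0 1 zero_le_one (min s (t:ℝ))) ≤ c
  rw [Set.projIcc_of_mem zero_le_one hm]
  exact h ⟨min s t, hm⟩ (Subtype.mk_le_mk.mpr (min_le_right _ _))

lemma runMax_mono (P : unitInterval → ℝ) (hP : Continuous P) {s t : unitInterval} (hst : s ≤ t) :
    runMax P (s : ℝ) ≤ runMax P (t : ℝ) := by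
  apply csSup_le_csSup
  · exact isCompact_Icc.bddAbove_image
      ((Continuous.comp hP (continuous_projIcc.comp (continuous_min.comp
        (continuous_id.prodMk continuous_const)))).continuousOn)
  · exact (Set.nonempty_Icc.mpr zero_le_one).image _
  · rintro x ⟨u, hu, rfl⟩
    refine ⟨min u (s : ℝ), ⟨le_min hu.1 s.2.1, le_trans (min_le_left _ _) hu.2⟩, ?_⟩
    show P (Set.projIcc 0 1 zero_le_one (min (min u (s:ℝ)) (t:ℝ))) =
      P (Set.projIcc 0 1 zero_le_one (min u (s:ℝ)))
    rw [min_eq_left (le_trans (min_le_right _ _) (Subtype.coe_le_coe.mpr hst))]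

lemma segCurve_apply (a b : ℝ) (t : unitInterval) :
    segCurve a b t = (1 - (t:ℝ)) * a + (t:ℝ) * b := by
  simp [segCurve, smul_eq_mul]

lemma segCurve_mem (a b : ℝ) (hab : a ≤ b) (t : unitInterval) :
    segCurve a b t ∈ Set.Icc a b := by
  rw [segCurve_apply]
  constructor <;> nlinarith [t.2.1, t.2.2]

lemma segCurve_mono (a b : ℝ) (hab : a ≤ b) : Monotone (segCurve a b) := by
  intro u v huv
  rw [segCurve_apply, segCurve_apply]
  have h := Subtype.coe_le_coe.mpr huv
  nlinarith [u.2.1, v.2.2]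

lemma segCurve_zero (a b : ℝ) : segCurve a b 0 = a := by
  rw [segCurve_apply]; norm_num

lemma segCurve_one (a b : ℝ) : segCurve a b 1 = b := by
  rw [segCurve_apply]; norm_num

lemma continuous_segCurve (a b : ℝ) : Continuous (segCurve a b) := by
  have h : Continuous fun t : unitInterval => (1 - (t:ℝ)) * a + (t:ℝ) * b :=
    ((continuous_const.sub continuous_subtype_val).mul continuous_const).add
      (continuous_subtype_val.mul continuous_const)
  have he : segCurve a b = fun t : unitInterval => (1 - (t:ℝ)) * a + (t:ℝ) * b :=
    funext fun t => segCurve_apply a b t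
  rw [he]
  exact h

/-- For a directed segment `Q` from `a` to `b` with `a ≤ b` and a
continuous curve `P : [0,1] → ℝ`, `d_F(P,Q) ≤ δ` iff `P` is `2δ`-monotone
increasing, endpoints match within `δ`, and `P ⊆ [a - δ, b + δ]`. -/
theorem frechetDist_le_segment_iff (δ : ℝ) (hδ : 0 < δ) (a b : ℝ) (hab : a ≤ b)
    (P : unitInterval → ℝ) (hP : Continuous P) :
    frechetDist P (segCurve a b) ≤ δ ↔
      (ApproxInc (2 * δ) P ∧
        |P 0 - a| ≤ δ ∧ |P 1 - b| ≤ δ ∧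
        ∀ t : unitInterval, P t ∈ Set.Icc (a - δ) (b + δ)) := by
  have hFbdd : BddBelow {r : ℝ | ∃ f g : unitInterval → unitInterval,
      Continuous f ∧ Monotone f ∧ Function.Surjective f ∧
      Continuous g ∧ Monotone g ∧ Function.Surjective g ∧
      ∀ t, dist (P (f t)) (segCurve a b (g t)) ≤ r} := by
    refine ⟨0, ?_⟩
    rintro r ⟨f, g, -, -, -, -, -, -, hb⟩
    exact le_trans dist_nonneg (hb 0)
  constructor
  · -- forward direction
    intro h
    unfold frechetDist at h
    have hFne : Set.Nonempty {r : ℝ | ∃ f g : unitInterval → unitInterval,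
        Continuous f ∧ Monotone f ∧ Function.Surjective f ∧
        Continuous g ∧ Monotone g ∧ Function.Surjective g ∧
        ∀ t, dist (P (f t)) (segCurve a b (g t)) ≤ r} := by
      obtain ⟨x, -, hx⟩ := isCompact_univ.exists_isMaxOn Set.univ_nonempty
        ((hP.dist (continuous_segCurve a b)).continuousOn)
      exact ⟨dist (P x) (segCurve a b x), id, id, continuous_id, monotone_id,
        Function.surjective_id, continuous_id, monotone_id, Function.surjective_id,
        fun t => hx (Set.mem_univ t)⟩
    have key : ∀ ε : ℝ, 0 < ε → ∃ f g : unitInterval → unitInterval,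
        Monotone f ∧ Function.Surjective f ∧ Monotone g ∧ Function.Surjective g ∧
        ∀ t, |P (f t) - segCurve a b (g t)| ≤ δ + ε := by
      intro ε hε
      have hlt := lt_of_le_of_lt h (lt_add_of_pos_right δ hε)
      obtain ⟨r, ⟨f, g, -, hfm, hfs, -, hgm, hgs, hb⟩, hr⟩ := (csInf_lt_iff hFbdd hFne).mp hlt
      refine ⟨f, g, hfm, hfs, hgm, hgs, fun t => ?_⟩
      have := hb t
      rw [Real.dist_eq] at this
      linarith
    refine ⟨?_, ?_, ?_, ?_⟩
    · -- ApproxInc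
      intro s t hst
      have h2 : ∀ ε : ℝ, 0 < ε → P s - 2*δ ≤ P t + ε := by
        intro ε hε
        obtain ⟨f, g, hfm, hfs, hgm, hgs, hb⟩ := key (ε/2) (by linarith)
        obtain ⟨u, hu⟩ := hfs s
        obtain ⟨v, hv⟩ := hfs t
        rcases le_total u v with huv | huv
        · have h1 := abs_le.mp (hb u)
          have h2 := abs_le.mp (hb v)
          rw [hu] at h1; rw [hv] at h2
          have hseg : segCurve a b (g u) ≤ segCurve a b (g v) :=
            segCurve_mono a b hab (hgm huv)
          linarith [h1.2, h2.1]
        · have hts : t ≤ s := by rw [← hu, ← hv]; exact hfm huv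
          have : s = t := le_antisymm hst hts
          rw [this]; linarith
      exact le_of_forall_pos_le_add h2
    · -- endpoint 0
      apply abs_le.mpr
      constructor
      · rw [neg_le, ← sub_nonneg]
        have h2 : ∀ ε : ℝ, 0 < ε → a - P 0 ≤ δ + ε := by
          intro ε hε
          obtain ⟨f, g, hfm, hfs, hgm, hgs, hb⟩ := key ε hε
          obtain ⟨u, hu⟩ := hfs 0
          have hf0 : f 0 = 0 :=
            le_antisymm (hu ▸ (hfm unitInterval.nonneg' : f 0 ≤ f u)) unitInterval.nonneg'
          obtain ⟨w, hw⟩ := hgs 0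
          have hg0 : g 0 = 0 :=
            le_antisymm (hw ▸ (hgm unitInterval.nonneg' : g 0 ≤ g w)) unitInterval.nonneg'
          have := abs_le.mp (hb 0)
          rw [hf0, hg0, segCurve_zero] at this
          linarith [this.1]
        linarith [le_of_forall_pos_le_add h2]
      · have h2 : ∀ ε : ℝ, 0 < ε → P 0 - a ≤ δ + ε := by
          intro ε hε
          obtain ⟨f, g, hfm, hfs, hgm, hgs, hb⟩ := key ε hε
          obtain ⟨u, hu⟩ := hfs 0
          have hf0 : f 0 = 0 :=
            le_antisymm (hu ▸ (hfm unitInterval.nonneg' : f 0 ≤ f u)) unitInterval.nonneg'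
          obtain ⟨w, hw⟩ := hgs 0
          have hg0 : g 0 = 0 :=
            le_antisymm (hw ▸ (hgm unitInterval.nonneg' : g 0 ≤ g w)) unitInterval.nonneg'
          have := abs_le.mp (hb 0)
          rw [hf0, hg0, segCurve_zero] at this
          linarith [this.2]
        linarith [le_of_forall_pos_le_add h2]
    · -- endpoint 1
      apply abs_le.mpr
      constructor
      · rw [neg_le, ← sub_nonneg]
        have h2 : ∀ ε : ℝ, 0 < ε → b - P 1 ≤ δ + ε := by
          intro ε hε
          obtain ⟨f, g, hfm, hfs, hgm, hgs, hb⟩ := key ε hε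
          obtain ⟨u, hu⟩ := hfs 1
          have hf1 : f 1 = 1 :=
            le_antisymm unitInterval.le_one' (hu ▸ (hfm unitInterval.le_one' : f u ≤ f 1))
          obtain ⟨w, hw⟩ := hgs 1
          have hg1 : g 1 = 1 :=
            le_antisymm unitInterval.le_one' (hw ▸ (hgm unitInterval.le_one' : g w ≤ g 1))
          have := abs_le.mp (hb 1)
          rw [hf1, hg1, segCurve_one] at this
          linarith [this.1]
        linarith [le_of_forall_pos_le_add h2]
      · have h2 : ∀ ε : ℝ, 0 < ε → P 1 - b ≤ δ + ε := by
          intro ε hε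
          obtain ⟨f, g, hfm, hfs, hgm, hgs, hb⟩ := key ε hε
          obtain ⟨u, hu⟩ := hfs 1
          have hf1 : f 1 = 1 :=
            le_antisymm unitInterval.le_one' (hu ▸ (hfm unitInterval.le_one' : f u ≤ f 1))
          obtain ⟨w, hw⟩ := hgs 1
          have hg1 : g 1 = 1 :=
            le_antisymm unitInterval.le_one' (hw ▸ (hgm unitInterval.le_one' : g w ≤ g 1))
          have := abs_le.mp (hb 1)
          rw [hf1, hg1, segCurve_one] at this
          linarith [this.2]
        linarith [le_of_forall_pos_le_add h2]
    · -- range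
      intro t
      constructor
      · have h2 : ∀ ε : ℝ, 0 < ε → (a - δ) - P t ≤ 0 + ε := by
          intro ε hε
          obtain ⟨f, g, hfm, hfs, hgm, hgs, hb⟩ := key ε hε
          obtain ⟨u, hu⟩ := hfs t
          have h1 := abs_le.mp (hb u)
          rw [hu] at h1
          have hm := segCurve_mem a b hab (g u)
          linarith [h1.2, hm.1]
        linarith [le_of_forall_pos_le_add h2]
      · have h2 : ∀ ε : ℝ, 0 < ε → P t - (b + δ) ≤ 0 + ε := by
          intro ε hε
          obtain ⟨f, g, hfm, hfs, hgm, hgs, hb⟩ := key ε hε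
          obtain ⟨u, hu⟩ := hfs t
          have h1 := abs_le.mp (hb u)
          rw [hu] at h1
          have hm := segCurve_mem a b hab (g u)
          linarith [h1.1, hm.2]
        linarith [le_of_forall_pos_le_add h2]
  · -- backward direction
    rintro ⟨hInc, h0, h1, hrange⟩
    unfold frechetDist
    apply csInf_le hFbdd
    rcases eq_or_lt_of_le hab with heq | hlt
    · -- degenerate case a = b
      refine ⟨id, id, continuous_id, monotone_id, Function.surjective_id,
        continuous_id, monotone_id, Function.surjective_id, fun t => ?_⟩
      have hseg := segCurve_mem a b hab t
      have hr := hrange t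
      rw [Real.dist_eq, abs_le]
      exact ⟨by simp only [id]; linarith [hseg.2, hr.1],
             by simp only [id]; linarith [hseg.1, hr.2]⟩
    · -- non-degenerate case a < b
      set N : unitInterval → ℝ := fun u => max a (min b (runMax P u - δ)) with hN
      have hNc : Continuous N := continuous_const.max (continuous_const.min
        (((continuous_runMax P hP).comp continuous_subtype_val).sub continuous_const))
      have hNmono : ∀ u v : unitInterval, u ≤ v → N u ≤ N v := fun u v huv =>
        max_le_max le_rfl (min_le_min le_rfl (sub_le_sub_right (runMax_mono P hP huv) δ))
      have hNmem : ∀ u, a ≤ N u ∧ N u ≤ b := fun u =>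
        ⟨le_max_left _ _, max_le hab (min_le_left _ _)⟩
      have hkey : ∀ u : unitInterval, P u - δ ≤ N u ∧ N u ≤ P u + δ := by
        intro u
        have hMge := le_runMax P hP u
        have hMle : runMax P u ≤ P u + 2*δ :=
          runMax_le P u _ (fun s hs => by have := hInc s u hs; linarith)
        have hru := hrange u
        constructor
        · exact le_max_of_le_right (le_min (by linarith [hru.2]) (by linarith))
        · exact max_le (by linarith [hru.1]) (le_trans (min_le_right _ _) (by linarith))
      have h0' := abs_le.mp h0
      have h1' := abs_le.mp h1
      have hN0 : N 0 = a := by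
        have hM0 : runMax P ((0:unitInterval):ℝ) ≤ P 0 :=
          runMax_le P 0 _ (fun s hs =>
            le_of_eq (congrArg P (le_antisymm hs unitInterval.nonneg')))
        exact max_eq_left (le_trans (min_le_right _ _) (by linarith [h0'.2]))
      set f : unitInterval → unitInterval := fun t =>
        ⟨min (2*(t:ℝ)) 1, ⟨le_min (mul_nonneg (by norm_num) t.2.1) zero_le_one,
          min_le_right _ _⟩⟩ with hf
      have hfc : Continuous f := Continuous.subtype_mk
        ((continuous_const.mul continuous_subtype_val).min continuous_const) _
      have hfm : Monotone f := fun u v huv => Subtype.mk_le_mk.mpr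
        (min_le_min (by have := Subtype.coe_le_coe.mpr huv; linarith) le_rfl)
      have hfs : Function.Surjective f := by
        intro y
        refine ⟨⟨(y:ℝ)/2, ⟨div_nonneg y.2.1 (by norm_num), by linarith [y.2.2]⟩⟩, ?_⟩
        apply Subtype.ext
        show min (2*((y:ℝ)/2)) 1 = (y:ℝ)
        rw [show 2*((y:ℝ)/2) = (y:ℝ) by ring, min_eq_left y.2.2]
      have hf0 : f 0 = 0 := by
        apply Subtype.ext
        show min (2*((0:unitInterval):ℝ)) 1 = ((0:unitInterval):ℝ)
        norm_num
      have hf1 : f 1 = 1 := by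
        apply Subtype.ext
        show min (2*((1:unitInterval):ℝ)) 1 = ((1:unitInterval):ℝ)
        norm_num
      set S : unitInterval → ℝ := fun t => N (f t) + max (2*(t:ℝ) - 1) 0 * (b - N 1) with hS
      have hbc : N 1 ≤ b := (hNmem 1).2
      have hSc : Continuous S := (hNc.comp hfc).add
        ((((continuous_const.mul continuous_subtype_val).sub continuous_const).max
          continuous_const).mul continuous_const)
      have hSmono : ∀ u v : unitInterval, u ≤ v → S u ≤ S v := by
        intro u v huv
        have hc := Subtype.coe_le_coe.mpr huv
        exact add_le_add (hNmono _ _ (hfm huv))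
          (mul_le_mul_of_nonneg_right (max_le_max (by linarith) le_rfl) (by linarith))
      have hSmem : ∀ t, a ≤ S t ∧ S t ≤ b := by
        intro t
        have hm1 := hNmem (f t)
        have hmax0 : (0:ℝ) ≤ max (2*(t:ℝ)-1) 0 := le_max_right _ _
        have hmax1 : max (2*(t:ℝ)-1) 0 ≤ 1 := max_le (by linarith [t.2.2]) zero_le_one
        have ht1 : N (f t) ≤ N 1 := hNmono _ _ unitInterval.le_one'
        constructor
        · have : (0:ℝ) ≤ max (2*(t:ℝ)-1) 0 * (b - N 1) :=
            mul_nonneg hmax0 (by linarith)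
          show a ≤ N (f t) + max (2*(t:ℝ)-1) 0 * (b - N 1)
          linarith [hm1.1]
        · have : max (2*(t:ℝ)-1) 0 * (b - N 1) ≤ 1 * (b - N 1) :=
            mul_le_mul_of_nonneg_right hmax1 (by linarith)
          show N (f t) + max (2*(t:ℝ)-1) 0 * (b - N 1) ≤ b
          linarith
      have hS0 : S 0 = a := by
        show N (f 0) + max (2*((0:unitInterval):ℝ) - 1) 0 * (b - N 1) = a
        rw [hf0, hN0]
        norm_num
      have hS1 : S 1 = b := by
        show N (f 1) + max (2*((1:unitInterval):ℝ) - 1) 0 * (b - N 1) = b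
        rw [hf1]
        norm_num
      set g : unitInterval → unitInterval := fun t =>
        ⟨(S t - a)/(b-a), ⟨div_nonneg (by linarith [(hSmem t).1]) (by linarith),
          (div_le_one (by linarith)).mpr (by linarith [(hSmem t).2])⟩⟩ with hg
      have hgc : Continuous g := Continuous.subtype_mk
        ((hSc.sub continuous_const).div_const _) _
      have hgm : Monotone g := by
        intro u v huv
        apply Subtype.mk_le_mk.mpr
        have := hSmono u v huv
        gcongr
      have hQg : ∀ t, segCurve a b (g t) = S t := by
        intro t
        rw [segCurve_apply]
        show (1 - (S t - a)/(b-a)) * a + ((S t - a)/(b-a)) * b = S t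
        have hba : b - a ≠ 0 := ne_of_gt (by linarith)
        field_simp
        ring
      have hg0 : g 0 = 0 := by
        apply Subtype.ext
        show (S 0 - a)/(b-a) = ((0:unitInterval):ℝ)
        rw [hS0]
        norm_num
      have hg1 : g 1 = 1 := by
        apply Subtype.ext
        show (S 1 - a)/(b-a) = ((1:unitInterval):ℝ)
        rw [hS1]
        rw [div_self (by linarith : b - a ≠ 0)]
        norm_num
      have hgs : Function.Surjective g := by
        intro y
        have hGc : Continuous fun x : ℝ =>
            (S (Set.projIcc 0 1 zero_le_one x) - a)/(b-a) :=
          ((hSc.comp continuous_projIcc).sub continuous_const).div_const _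
        have p0 : Set.projIcc 0 1 zero_le_one (0:ℝ) = (0:unitInterval) := by
          apply Subtype.ext
          rw [Set.projIcc_of_mem zero_le_one unitInterval.zero_mem]
          norm_num
        have p1 : Set.projIcc 0 1 zero_le_one (1:ℝ) = (1:unitInterval) := by
          apply Subtype.ext
          rw [Set.projIcc_of_mem zero_le_one unitInterval.one_mem]
          norm_num
        have hy : (y:ℝ) ∈ Set.Icc ((S (Set.projIcc 0 1 zero_le_one (0:ℝ)) - a)/(b-a))
            ((S (Set.projIcc 0 1 zero_le_one (1:ℝ)) - a)/(b-a)) := by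
          rw [p0, p1, hS0, hS1]
          constructor
          · rw [sub_self, zero_div]; exact y.2.1
          · rw [div_self (by linarith : b - a ≠ 0)]; exact y.2.2
        obtain ⟨x, hx01, hx⟩ := intermediate_value_Icc zero_le_one hGc.continuousOn hy
        refine ⟨⟨x, hx01⟩, ?_⟩
        apply Subtype.ext
        show (S ⟨x, hx01⟩ - a)/(b-a) = (y:ℝ)
        rw [← Set.projIcc_of_mem zero_le_one hx01]
        exact hx
      refine ⟨f, g, hfc, hfm, hfs, hgc, hgm, hgs, fun t => ?_⟩
      rw [hQg, Real.dist_eq, abs_le]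
      rcases le_or_gt (2*(t:ℝ)) 1 with hcase | hcase
      · have hmax : max (2*(t:ℝ)-1) 0 = 0 := max_eq_right (by linarith)
        have hSt : S t = N (f t) := by
          show N (f t) + max (2*(t:ℝ)-1) 0 * (b - N 1) = N (f t)
          rw [hmax]; ring
        have hk := hkey (f t)
        rw [hSt]
        exact ⟨by linarith [hk.1], by linarith [hk.2]⟩
      · have hft : f t = 1 := by
          apply Subtype.ext
          show min (2*(t:ℝ)) 1 = ((1:unitInterval):ℝ)
          rw [min_eq_right (le_of_lt hcase)]
          norm_num
        have hk1 := hkey 1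
        have hmax0 : (0:ℝ) ≤ max (2*(t:ℝ)-1) 0 := le_max_right _ _
        have hlow : N 1 ≤ S t := by
          show N 1 ≤ N (f t) + max (2*(t:ℝ)-1) 0 * (b - N 1)
          rw [hft]
          nlinarith [hbc]
        have hhigh : S t ≤ b := (hSmem t).2
        rw [hft]
        constructor
        · linarith [h1'.1]
        · linarith [hk1.1]
end

section
/- Let δ > 0 and let P, Q : [0,1] → R be 2δ-monotone curves such that: (i) P is 2δ-monotone with respect to the directed segment from Q(0) to Q(1); (ii) |P(0) − Q(0)| ≤ δ and |P(1) − Q(1)| ≤ δ; (iii) every point of P is within distance δ of some point of Q; and (iv) every value of Q lies in the closed interval with endpoints Q(0) and Q(1). Then d_F(P,Q) ≤ δ. -/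
section FrechetAux

open Set


/-- Running future minimum of `P` over `[s,1]`. -/
noncomputable def auxF (P : ℝ → ℝ) (s : ℝ) : ℝ := sInf (P '' Set.Icc s 1)

/-- First-crossing time of `Q` at level `β` (or `1` if never). -/
noncomputable def auxT (Q : ℝ → ℝ) (β : ℝ) : ℝ :=
  sInf ((Set.Icc (0:ℝ) 1 ∩ {v | β ≤ Q v}) ∪ {1})

lemma auxF_bddBelow (P : ℝ → ℝ) (hP : Continuous P) (s : ℝ) :
    BddBelow (P '' Set.Icc s 1) :=
  ((isCompact_Icc).image hP).bddBelow

lemma auxF_le (P : ℝ → ℝ) (hP : Continuous P) {s x : ℝ} (h1 : s ≤ x) (h2 : x ≤ 1) :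
    auxF P s ≤ P x :=
  csInf_le (auxF_bddBelow P hP s) ⟨x, ⟨h1, h2⟩, rfl⟩

lemma le_auxF (P : ℝ → ℝ) {s c : ℝ} (hs : s ≤ 1)
    (h : ∀ x, s ≤ x → x ≤ 1 → c ≤ P x) : c ≤ auxF P s := by
  apply le_csInf
  · exact (Set.nonempty_Icc.mpr hs).image P
  · rintro y ⟨x, ⟨hx1, hx2⟩, rfl⟩
    exact h x hx1 hx2

lemma auxF_mono (P : ℝ → ℝ) (hP : Continuous P) {s s' : ℝ} (h : s ≤ s') (h1 : s' ≤ 1) :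
    auxF P s ≤ auxF P s' := by
  apply csInf_le_csInf (auxF_bddBelow P hP s) ((Set.nonempty_Icc.mpr h1).image P)
  exact Set.image_mono (Set.Icc_subset_Icc_left h)

lemma auxF_attained (P : ℝ → ℝ) (hP : Continuous P) {s : ℝ} (hs : s ≤ 1) :
    ∃ w, s ≤ w ∧ w ≤ 1 ∧ P w = auxF P s := by
  have hK : IsCompact (P '' Set.Icc s 1) := (isCompact_Icc).image hP
  have hne : (P '' Set.Icc s 1).Nonempty := (Set.nonempty_Icc.mpr hs).image P
  have := hK.sInf_mem hne
  obtain ⟨w, ⟨hw1, hw2⟩, hw⟩ := this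
  exact ⟨w, hw1, hw2, hw⟩

lemma auxF_one (P : ℝ → ℝ) : auxF P 1 = P 1 := by
  simp [auxF, Set.Icc_self]

section T
variable (Q : ℝ → ℝ)

lemma auxT_set_nonempty (β : ℝ) :
    ((Set.Icc (0:ℝ) 1 ∩ {v | β ≤ Q v}) ∪ {1}).Nonempty :=
  ⟨1, Or.inr rfl⟩

lemma auxT_set_bddBelow (β : ℝ) :
    BddBelow ((Set.Icc (0:ℝ) 1 ∩ {v | β ≤ Q v}) ∪ {1}) := by
  refine ⟨0, ?_⟩
  rintro v (⟨⟨h0, _⟩, _⟩ | h)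
  · exact h0
  · rw [Set.mem_singleton_iff] at h; rw [h]; norm_num

lemma auxT_nonneg (β : ℝ) : 0 ≤ auxT Q β := by
  apply le_csInf (auxT_set_nonempty Q β)
  rintro v (⟨⟨h0, _⟩, _⟩ | h)
  · exact h0
  · rw [Set.mem_singleton_iff] at h; rw [h]; norm_num

lemma auxT_le_one (β : ℝ) : auxT Q β ≤ 1 := by
  apply csInf_le (auxT_set_bddBelow Q β) (Or.inr rfl)

lemma auxT_mem (hQ : Continuous Q) (β : ℝ) :
    auxT Q β ∈ (Set.Icc (0:ℝ) 1 ∩ {v | β ≤ Q v}) ∪ {1} := by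
  apply IsClosed.csInf_mem
  · exact (isClosed_Icc.inter (isClosed_le continuous_const hQ)).union isClosed_singleton
  · exact auxT_set_nonempty Q β
  · exact auxT_set_bddBelow Q β

lemma auxT_lt {β v : ℝ} (h0 : 0 ≤ v) (h1 : v ≤ 1)
    (h : v < auxT Q β) : Q v < β := by
  by_contra hc
  push_neg at hc
  have : auxT Q β ≤ v := csInf_le (auxT_set_bddBelow Q β) (Or.inl ⟨⟨h0, h1⟩, hc⟩)
  linarith

lemma auxT_mono {β β' : ℝ} (h : β ≤ β') : auxT Q β ≤ auxT Q β' := by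
  apply csInf_le_csInf (auxT_set_bddBelow Q β) (auxT_set_nonempty Q β')
  rintro v (⟨hv1, hv2⟩ | hv)
  · exact Or.inl ⟨hv1, le_trans h hv2⟩
  · exact Or.inr hv

end T

/-- The (possibly discontinuous) monotone matching function. -/
noncomputable def auxg (P Q : ℝ → ℝ) (δ s : ℝ) : ℝ :=
  if s ≤ 0 then 0 else if 1 ≤ s then 1 else auxT Q (auxF P s + δ)

/-- The set used to define the reparametrization `auxpsi`. -/
def auxS (P Q : ℝ → ℝ) (δ r : ℝ) : Set ℝ :=
  {s | s ∈ Set.Icc (0:ℝ) 1 ∧ s + auxg P Q δ s ≤ max r 0}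

/-- Continuous inverse-type reparametrization. -/
noncomputable def auxpsi (P Q : ℝ → ℝ) (δ r : ℝ) : ℝ := sSup (auxS P Q δ r)

section G
variable (P Q : ℝ → ℝ) (δ : ℝ)


lemma auxg_nonneg (s : ℝ) : 0 ≤ auxg P Q δ s := by
  unfold auxg; split_ifs
  · norm_num
  · norm_num
  · exact auxT_nonneg Q _

lemma auxg_le_one (s : ℝ) : auxg P Q δ s ≤ 1 := by
  unfold auxg; split_ifs
  · norm_num
  · norm_num
  · exact auxT_le_one Q _

lemma auxg_zero : auxg P Q δ 0 = 0 := by simp [auxg]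

lemma auxg_one : auxg P Q δ 1 = 1 := by norm_num [auxg]

lemma auxg_of_mem {s : ℝ} (h0 : 0 < s) (h1 : s < 1) :
    auxg P Q δ s = auxT Q (auxF P s + δ) := by
  unfold auxg; rw [if_neg (by linarith), if_neg (by linarith)]

lemma auxg_mono (hP : Continuous P) : Monotone (auxg P Q δ) := by
  intro s s' h
  unfold auxg
  split_ifs with h1 h2 h3 h4 h5 h6 h7 h8
  · exact le_refl 0
  · norm_num
  · exact auxT_nonneg Q _
  · linarith
  · exact le_refl 1
  · exfalso; push_neg at h5 h6; linarith
  · exfalso; push_neg at h1 h4; linarith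
  · exact auxT_le_one Q _
  · push_neg at h1 h4 h7 h8
    exact auxT_mono Q (by linarith [auxF_mono P hP h (le_of_lt h8)])

end G

section psi
variable (P Q : ℝ → ℝ) (δ : ℝ)

lemma auxS_nonempty (r : ℝ) : (auxS P Q δ r).Nonempty := by
  refine ⟨0, ⟨le_refl 0, zero_le_one⟩, ?_⟩
  rw [auxg_zero]
  simpa using le_max_right r 0

lemma auxS_bddAbove (r : ℝ) : BddAbove (auxS P Q δ r) :=
  ⟨1, fun s hs => hs.1.2⟩

lemma auxpsi_nonneg (r : ℝ) : 0 ≤ auxpsi P Q δ r := by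
  apply le_csSup (auxS_bddAbove P Q δ r)
  refine ⟨⟨le_refl 0, zero_le_one⟩, ?_⟩
  rw [auxg_zero]
  simpa using le_max_right r 0

lemma auxpsi_le_one (r : ℝ) : auxpsi P Q δ r ≤ 1 :=
  csSup_le (auxS_nonempty P Q δ r) (fun s hs => hs.1.2)

lemma auxpsi_le (r : ℝ) (hr : 0 ≤ r) : auxpsi P Q δ r ≤ r := by
  apply csSup_le (auxS_nonempty P Q δ r)
  intro s hs
  have := hs.2
  have h2 := auxg_nonneg P Q δ s
  rw [max_eq_left hr] at this
  linarith

lemma auxpsi_mono (r r' : ℝ) (h : r ≤ r') : auxpsi P Q δ r ≤ auxpsi P Q δ r' := by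
  apply csSup_le_csSup (auxS_bddAbove P Q δ r') (auxS_nonempty P Q δ r)
  intro s hs
  exact ⟨hs.1, le_trans hs.2 (by exact max_le_max h (le_refl 0))⟩

lemma auxpsi_lip (hP : Continuous P) (r r' : ℝ) (h : r ≤ r') :
    auxpsi P Q δ r' ≤ auxpsi P Q δ r + (max r' 0 - max r 0) := by
  have hd : 0 ≤ max r' 0 - max r 0 := by
    have := max_le_max h (le_refl (0:ℝ)); linarith
  apply csSup_le (auxS_nonempty P Q δ r')
  intro s' hs'
  by_cases hc : s' ≤ auxpsi P Q δ r + (max r' 0 - max r 0)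
  · exact hc
  push_neg at hc
  exfalso
  set d := max r' 0 - max r 0 with hd'
  have hpsi0 : (0:ℝ) ≤ auxpsi P Q δ r := auxpsi_nonneg P Q δ r
  have hs'd : auxpsi P Q δ r < s' - d := by linarith
  have hmem : s' - d ∈ auxS P Q δ r := by
    constructor
    · constructor
      · linarith
      · have := hs'.1.2; linarith
    · have hg : auxg P Q δ (s' - d) ≤ auxg P Q δ s' := auxg_mono P Q δ hP (by linarith)
      have := hs'.2
      have : s' + auxg P Q δ (s' - d) ≤ max r' 0 := by linarith
      linarith
  have : s' - d ≤ auxpsi P Q δ r := le_csSup (auxS_bddAbove P Q δ r) hmem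
  linarith

lemma auxpsi_lipschitz (hP : Continuous P) : LipschitzWith 1 (auxpsi P Q δ) := by
  apply LipschitzWith.of_dist_le_mul
  intro r r'
  rw [Real.dist_eq, Real.dist_eq, NNReal.coe_one, one_mul]
  rcases le_total r' r with h | h
  · rw [abs_of_nonneg (by linarith [auxpsi_mono P Q δ r' r h] : (0:ℝ) ≤ auxpsi P Q δ r - auxpsi P Q δ r'), abs_of_nonneg (by linarith : (0:ℝ) ≤ r - r')]
    have := auxpsi_lip P Q δ hP r' r h
    have hm : max r 0 - max r' 0 ≤ r - r' := by
      rcases le_total r 0 with h1 | h1 <;> rcases le_total r' 0 with h2 | h2 <;>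
        simp [max_eq_left, max_eq_right, h1, h2] <;> linarith
    linarith
  · rw [abs_of_nonpos (by linarith [auxpsi_mono P Q δ r r' h] : auxpsi P Q δ r - auxpsi P Q δ r' ≤ 0), abs_of_nonpos (by linarith : r - r' ≤ 0)]
    have := auxpsi_lip P Q δ hP r r' h
    have hm : max r' 0 - max r 0 ≤ r' - r := by
      rcases le_total r 0 with h1 | h1 <;> rcases le_total r' 0 with h2 | h2 <;>
        simp [max_eq_left, max_eq_right, h1, h2] <;> linarith
    linarith

lemma auxpsi_zero : auxpsi P Q δ 0 = 0 := by
  apply le_antisymm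
  · apply csSup_le (auxS_nonempty P Q δ 0)
    intro s hs
    have h1 := hs.2
    have h2 := auxg_nonneg P Q δ s
    simp at h1
    linarith
  · exact auxpsi_nonneg P Q δ 0

lemma auxpsi_two : auxpsi P Q δ 2 = 1 := by
  apply le_antisymm (auxpsi_le_one P Q δ 2)
  apply le_csSup (auxS_bddAbove P Q δ 2)
  refine ⟨⟨zero_le_one, le_refl 1⟩, ?_⟩
  rw [auxg_one]
  norm_num

lemma auxpsi_K2 (r u : ℝ) (h1 : auxpsi P Q δ r < u) (h2 : u ≤ 1) :
    max r 0 < u + auxg P Q δ u := by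
  by_contra hc
  push_neg at hc
  have hu0 : (0:ℝ) ≤ u := le_trans (auxpsi_nonneg P Q δ r) (le_of_lt h1)
  have : u ≤ auxpsi P Q δ r := le_csSup (auxS_bddAbove P Q δ r) ⟨⟨hu0, h2⟩, hc⟩
  linarith

lemma auxpsi_K3 (r u : ℝ) (h1 : u < auxpsi P Q δ r) :
    ∃ w, w ∈ auxS P Q δ r ∧ u < w ∧ w ≤ auxpsi P Q δ r := by
  obtain ⟨w, hw, hw2⟩ := exists_lt_of_lt_csSup (auxS_nonempty P Q δ r) h1
  exact ⟨w, hw, hw2, le_csSup (auxS_bddAbove P Q δ r) hw⟩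

/-- `r - auxpsi r ∈ [0,1]` for `r ∈ [0,2]`. -/
lemma auxpsi_v_mem (r : ℝ) (h0 : 0 ≤ r) (h2 : r ≤ 2) :
    0 ≤ r - auxpsi P Q δ r ∧ r - auxpsi P Q δ r ≤ 1 := by
  constructor
  · linarith [auxpsi_le P Q δ r h0]
  · rcases le_total r 1 with h | h
    · linarith [auxpsi_nonneg P Q δ r]
    · have hmem : min (r - 1) 1 ∈ auxS P Q δ r := by
        constructor
        · exact ⟨le_min (by linarith) zero_le_one, min_le_right _ _⟩
        · rcases le_total (r-1) 1 with hm | hm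
          · rw [min_eq_left hm, max_eq_left h0]
            linarith [auxg_le_one P Q δ (r-1)]
          · rw [min_eq_right hm, auxg_one, max_eq_left h0]
            linarith
      have hle : min (r-1) 1 ≤ auxpsi P Q δ r := le_csSup (auxS_bddAbove P Q δ r) hmem
      have h3 : min (r-1) 1 ≥ r - 1 := by
        rcases le_total (r-1) 1 with hm | hm
        · rw [min_eq_left hm]
        · rw [min_eq_right hm]; linarith
      linarith

end psi

section Main
variable {P Q : ℝ → ℝ} {δ : ℝ}

/-- pointwise continuity extraction -/
lemma cont_at (hP : Continuous P) (s : ℝ) {ε : ℝ} (hε : 0 < ε) :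
    ∃ η > 0, ∀ x, |x - s| < η → |P x - P s| < ε := by
  have := Metric.continuousAt_iff.mp (hP.continuousAt (x := s)) ε hε
  obtain ⟨η, hη, h⟩ := this
  exact ⟨η, hη, fun x hx => by
    have := h (by rwa [Real.dist_eq] : dist x s < η)
    rwa [Real.dist_eq] at this⟩

/-- right-continuity of the future minimum -/
lemma auxF_rightcont (hP : Continuous P) {s : ℝ} (hs0 : 0 ≤ s) (hs1 : s < 1)
    {ε : ℝ} (hε : 0 < ε) :
    ∃ u, s < u ∧ u < 1 ∧ auxF P u ≤ auxF P s + ε := by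
  obtain ⟨w, hw1, hw2, hw3⟩ := auxF_attained P hP (le_of_lt hs1)
  rcases lt_or_ge s w with hsw | hsw
  · rcases lt_or_ge w 1 with hw1' | hw1'
    · exact ⟨w, hsw, hw1', by
        have : auxF P w ≤ P w := auxF_le P hP (le_refl w) hw2
        linarith⟩
    · -- w = 1
      have hweq : w = 1 := le_antisymm hw2 hw1'
      refine ⟨(s+1)/2, by linarith, by linarith, ?_⟩
      have : auxF P ((s+1)/2) ≤ P w := auxF_le P hP (by linarith) hw2
      linarith
  · -- w = s, so auxF P s = P s
    have hws : w = s := le_antisymm hsw hw1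
    obtain ⟨η, hη, hcont⟩ := cont_at hP s hε
    set u := min (s + η/2) ((s+1)/2) with hu
    have hu1 : s < u := lt_min (by linarith) (by linarith)
    have hu2 : u < 1 := lt_of_le_of_lt (min_le_right _ _) (by linarith)
    refine ⟨u, hu1, hu2, ?_⟩
    have h3 : auxF P u ≤ P u := auxF_le P hP (le_refl u) (le_of_lt hu2)
    have h4 : |u - s| < η := by
      rw [abs_of_pos (by linarith)]
      have : u ≤ s + η/2 := min_le_left _ _
      linarith
    have h5 := hcont u h4
    have h6 : P s = auxF P s := hws ▸ hw3
    rw [abs_lt] at h5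
    linarith [h5.2]

/-- left approximation of the future minimum -/
lemma auxF_leftapprox (hP : Continuous P) {s : ℝ} (hs0 : 0 < s) (hs1 : s ≤ 1)
    {ε : ℝ} (hε : 0 < ε) :
    ∃ u, 0 < u ∧ u < s ∧ auxF P s - ε ≤ auxF P u := by
  obtain ⟨η, hη, hcont⟩ := cont_at hP s hε
  set u := max (s - η/2) (s/2) with hu
  have hu1 : 0 < u := lt_of_lt_of_le (by linarith) (le_max_right _ _)
  have hu2 : u < s := max_lt (by linarith) (by linarith)
  refine ⟨u, hu1, hu2, ?_⟩
  apply le_auxF P (by linarith)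
  intro x hx1 hx2
  rcases lt_or_ge x s with hxs | hxs
  · have h4 : |x - s| < η := by
      rw [abs_of_nonpos (by linarith)]
      have : s - η/2 ≤ u := le_max_left _ _
      linarith
    have h5 := hcont x h4
    rw [abs_lt] at h5
    have h6 : auxF P s ≤ P s := auxF_le P hP (le_refl s) hs1
    linarith [h5.1]
  · have : auxF P s ≤ P x := auxF_le P hP hxs hx2
    linarith

variable (hδ : 0 < δ) (hP : Continuous P) (hQ : Continuous Q)
  (hP2 : ∀ u v, 0 ≤ u → u ≤ v → v ≤ 1 → P u - 2*δ ≤ P v)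
  (hQ2 : ∀ u v, 0 ≤ u → u ≤ v → v ≤ 1 → Q u - 2*δ ≤ Q v)
  (hQr : ∀ v, 0 ≤ v → v ≤ 1 → Q 0 ≤ Q v ∧ Q v ≤ Q 1)
  (h0 : |P 0 - Q 0| ≤ δ) (h1 : |P 1 - Q 1| ≤ δ)
  (hr : ∀ u, 0 ≤ u → u ≤ 1 → Q 0 - δ ≤ P u ∧ P u ≤ Q 1 + δ)

include hδ hP hQ hP2 hQ2 hQr h0 h1 hr

theorem main_bound (r : ℝ) (hr0 : 0 ≤ r) (hr2 : r ≤ 2) :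
    |P (auxpsi P Q δ r) - Q (r - auxpsi P Q δ r)| ≤ δ := by
  set s := auxpsi P Q δ r with hs
  set v := r - s with hv
  have hs0 : 0 ≤ s := auxpsi_nonneg P Q δ r
  have hs1 : s ≤ 1 := auxpsi_le_one P Q δ r
  have hv0 : 0 ≤ v := (auxpsi_v_mem P Q δ r hr0 hr2).1
  have hv1 : v ≤ 1 := (auxpsi_v_mem P Q δ r hr0 hr2).2
  have hmaxr : max r 0 = r := max_eq_left hr0
  have habs0 := abs_le.mp h0
  have habs1 := abs_le.mp h1
  have hFleP : auxF P s ≤ P s := auxF_le P hP (le_refl s) hs1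
  have hPleF : P s - 2*δ ≤ auxF P s := by
    apply le_auxF P hs1
    intro x hx1 hx2
    exact hP2 s x hs0 hx1 hx2
  -- UPPER BOUND : Q v ≤ P s + δ
  have upper : Q v ≤ P s + δ := by
    rcases eq_or_lt_of_le hs1 with hseq | hslt
    · -- s = 1
      have hQv := hQr v hv0 hv1
      have := hr 1 zero_le_one (le_refl 1)
      rw [hseq]
      linarith [hQv.2, habs1.1]
    · rcases eq_or_lt_of_le hv0 with hveq | hvlt
      · -- v = 0
        have := (hr s hs0 hs1).1
        rw [← hveq]
        linarith
      · -- 0 < v, s < 1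
        by_contra hcon
        push_neg at hcon
        set ε := (Q v - P s - δ)/3 with hε
        have hεpos : 0 < ε := by simp only [hε]; linarith
        obtain ⟨ηQ, hηQ, hcontQ⟩ := cont_at hQ v hεpos
        obtain ⟨u₀, hu₀1, hu₀2, hu₀3⟩ := auxF_rightcont hP hs0 hslt hεpos
        set u := min u₀ (min (s + v) (s + ηQ/2)) with hu
        have hus : s < u := by
          apply lt_min hu₀1
          exact lt_min (by linarith) (by linarith)
        have hu1 : u < 1 := lt_of_le_of_lt (min_le_left _ _) hu₀2
        have hu0 : 0 < u := lt_of_le_of_lt hs0 hus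
        have hFu : auxF P u ≤ auxF P s + ε := by
          have : auxF P u ≤ auxF P u₀ := auxF_mono P hP (min_le_left _ _) (le_of_lt hu₀2)
          linarith
        have hK2 := auxpsi_K2 P Q δ r u hus (le_of_lt hu1)
        rw [hmaxr] at hK2
        set w := v - (u - s) with hw
        have hw0 : 0 ≤ w := by
          have : u ≤ s + v := le_trans (min_le_right _ _) (min_le_left _ _)
          simp only [hw]; linarith
        have hwv : w < v := by simp only [hw]; linarith
        have hwgu : w < auxg P Q δ u := by
          simp only [hw, hv] at hK2 ⊢
          linarith
        rw [auxg_of_mem P Q δ hu0 hu1] at hwgu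
        have hQw : Q w < auxF P u + δ := auxT_lt Q hw0 (by linarith) hwgu
        have hQwv : |Q w - Q v| < ε := by
          apply hcontQ
          rw [abs_of_nonpos (by simp only [hw]; linarith)]
          have : u ≤ s + ηQ/2 := le_trans (min_le_right _ _) (min_le_right _ _)
          simp only [hw]
          linarith
        rw [abs_lt] at hQwv
        have : Q v < P s + δ + 3*ε := by linarith [hQwv.1]
        simp only [hε] at this
        linarith
  -- LOWER BOUND : P s - δ ≤ Q v
  have lower : P s - δ ≤ Q v := by
    rcases eq_or_lt_of_le hs0 with hseq | hspos
    · -- s = 0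
      have hQv := hQr v hv0 hv1
      rw [← hseq]
      linarith [hQv.1, habs0.2]
    · rcases le_or_gt (auxg P Q δ s) v with hvg | hvg
      · -- v ≥ g s
        rcases eq_or_lt_of_le hs1 with hseq1 | hslt1
        · -- s = 1 : g 1 = 1, so v = 1
          have : auxg P Q δ s = 1 := by rw [hseq1]; exact auxg_one P Q δ
          have hveq : v = 1 := le_antisymm hv1 (by rw [← this]; exact hvg)
          rw [hveq, hseq1]
          linarith [habs1.2]
        · -- s < 1
          rw [auxg_of_mem P Q δ hspos hslt1] at hvg
          rcases auxT_mem Q hQ (auxF P s + δ) with hmem | hmem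
          · -- Q (g s) ≥ F s + δ
            have hgs0 : 0 ≤ auxT Q (auxF P s + δ) := hmem.1.1
            have hQgs : auxF P s + δ ≤ Q (auxT Q (auxF P s + δ)) := hmem.2
            rcases eq_or_lt_of_le hvg with hveq | hvlt'
            · -- v = g s
              rw [hveq] at hQgs
              linarith
            · -- v > g s : then P s ≤ F s
              have hPsF : P s ≤ auxF P s := by
                apply le_of_forall_pos_le_add
                intro ε hεpos
                obtain ⟨η, hη, hcontP⟩ := cont_at hP s hεpos
                set u := min (s + η/2) (min ((s+1)/2) (s + (v - auxT Q (auxF P s + δ))/2)) with hu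
                have hus : s < u := by
                  apply lt_min (by linarith)
                  exact lt_min (by linarith) (by linarith)
                have hu1 : u < 1 := by
                  have : u ≤ (s+1)/2 := le_trans (min_le_right _ _) (min_le_left _ _)
                  linarith
                have hu0 : 0 < u := lt_of_le_of_lt hs0 hus
                have hK2 := auxpsi_K2 P Q δ r u hus (le_of_lt hu1)
                rw [hmaxr] at hK2
                have hgu : auxT Q (auxF P s + δ) < auxg P Q δ u := by
                  have h6 : u ≤ s + (v - auxT Q (auxF P s + δ))/2 :=
                    le_trans (min_le_right _ _) (min_le_right _ _)
                  have hrv : r = s + v := by rw [hv]; ring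
                  linarith
                rw [auxg_of_mem P Q δ hu0 hu1] at hgu
                have hFsu : auxF P s < auxF P u := by
                  by_contra hc
                  push_neg at hc
                  have := auxT_mono Q (by linarith : auxF P u + δ ≤ auxF P s + δ)
                  linarith
                have hminle : min (P s - ε) (auxF P u) ≤ auxF P s := by
                  apply le_auxF P hs1
                  intro x hx1 hx2
                  rcases le_total x u with hxu | hxu
                  · have h7 : |x - s| < η := by
                      rw [abs_of_nonneg (by linarith)]
                      have : u ≤ s + η/2 := min_le_left _ _
                      linarith
                    have h8 := hcontP x h7
                    rw [abs_lt] at h8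
                    have : P s - ε ≤ P x := by linarith [h8.1]
                    exact le_trans (min_le_left _ _) this
                  · have : auxF P u ≤ P x := auxF_le P hP hxu hx2
                    exact le_trans (min_le_right _ _) this
                rcases le_total (P s - ε) (auxF P u) with hle | hle
                · rw [min_eq_left hle] at hminle
                  linarith
                · rw [min_eq_right hle] at hminle
                  linarith
              -- use w := g s
              have : Q (auxT Q (auxF P s + δ)) - 2*δ ≤ Q v :=
                hQ2 _ v hgs0 (le_of_lt hvlt') hv1
              linarith
          · -- g s = 1 : v = 1
            rw [Set.mem_singleton_iff] at hmem
            rw [hmem] at hvg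
            have hveq : v = 1 := le_antisymm hv1 hvg
            have := (hr s hs0 hs1).2
            rw [hveq]
            linarith
      · -- v < g s
        -- Step 1: ∀ u < s (u ≥ 0), g u ≤ v
        have step1 : ∀ u, 0 ≤ u → u < s → auxg P Q δ u ≤ v := by
          intro u hu0 hus
          by_contra hc
          push_neg at hc
          have hε₀pos : 0 < auxg P Q δ u - v := by linarith
          obtain ⟨w, hwS, hww1, hws'⟩ := auxpsi_K3 P Q δ r (max u (s - (auxg P Q δ u - v)/2))
            (max_lt hus (by linarith))
          have hgw : auxg P Q δ u ≤ auxg P Q δ w :=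
            auxg_mono P Q δ hP (le_of_lt (lt_of_le_of_lt (le_max_left _ _) hww1))
          have hwsum := hwS.2
          rw [hmaxr] at hwsum
          have h7 : s - (auxg P Q δ u - v)/2 < w :=
            lt_of_le_of_lt (le_max_right _ _) hww1
          have hrv : r = s + v := by rw [hv]; ring
          linarith
        -- Step 2
        have step2 : ∀ ε, 0 < ε → ∃ w, 0 ≤ w ∧ w ≤ v ∧ auxF P s + δ - ε ≤ Q w := by
          intro ε hεpos
          obtain ⟨u, hu0, hus, hFu⟩ := auxF_leftapprox hP hspos hs1 hεpos
          refine ⟨auxg P Q δ u, auxg_nonneg P Q δ u, step1 u (le_of_lt hu0) hus, ?_⟩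
          rw [auxg_of_mem P Q δ hu0 (lt_of_lt_of_le hus hs1)]
          rcases auxT_mem Q hQ (auxF P u + δ) with hmem | hmem
          · have h8 : auxF P u + δ ≤ Q (auxT Q (auxF P u + δ)) := hmem.2
            linarith
          · exfalso
            rw [Set.mem_singleton_iff] at hmem
            have := step1 u (le_of_lt hu0) hus
            rw [auxg_of_mem P Q δ hu0 (lt_of_lt_of_le hus hs1), hmem] at this
            have := auxg_le_one P Q δ s
            linarith
        -- Step 3 : max of Q on [0,v]
        obtain ⟨w₀, hw₀mem, hw₀max⟩ :=
          isCompact_Icc.exists_isMaxOn (Set.nonempty_Icc.mpr hv0) (hQ.continuousOn (s := Set.Icc 0 v))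
        have hQw₀ : auxF P s + δ ≤ Q w₀ := by
          apply le_of_forall_pos_le_add
          intro ε hεpos
          obtain ⟨w, hw0, hwv, hQw⟩ := step2 ε hεpos
          have h9 : Q w ≤ Q w₀ := hw₀max (Set.mem_Icc.mpr ⟨hw0, hwv⟩)
          linarith
        rcases eq_or_lt_of_le hs1 with hseq1 | hslt1
        · -- s = 1
          have hF1 : auxF P s = P 1 := by rw [hseq1]; exact auxF_one P
          have : Q w₀ - 2*δ ≤ Q v := hQ2 w₀ v hw₀mem.1 hw₀mem.2 hv1
          rw [hseq1]
          rw [hF1] at hQw₀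
          linarith
        · -- s < 1 : contradiction
          exfalso
          rw [auxg_of_mem P Q δ hspos hslt1] at hvg
          have : Q w₀ < auxF P s + δ :=
            auxT_lt Q hw₀mem.1 (le_trans hw₀mem.2 hv1) (lt_of_le_of_lt hw₀mem.2 hvg)
          linarith
  rw [abs_le]
  constructor <;> linarith

end Main

section Assemble

lemma exists_matching (δ : ℝ) (hδ : 0 < δ) (P Q : unitInterval → ℝ)
    (hPc : Continuous P) (hQc : Continuous Q)
    (hPinc : ∀ s t : unitInterval, s ≤ t → P s - 2*δ ≤ P t)
    (hQinc : ∀ s t : unitInterval, s ≤ t → Q s - 2*δ ≤ Q t)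
    (hQr : ∀ v : unitInterval, Q 0 ≤ Q v ∧ Q v ≤ Q 1)
    (h0 : |P 0 - Q 0| ≤ δ) (h1 : |P 1 - Q 1| ≤ δ)
    (hrange : ∀ t : unitInterval, ∃ s : unitInterval, |P t - Q s| ≤ δ) :
    ∃ f g : unitInterval → unitInterval,
      Continuous f ∧ Monotone f ∧ Function.Surjective f ∧
      Continuous g ∧ Monotone g ∧ Function.Surjective g ∧
      ∀ t, |P (f t) - Q (g t)| ≤ δ := by
  classical
  set Pc : ℝ → ℝ := fun x => P (Set.projIcc 0 1 zero_le_one x) with hPcdef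
  set Qc : ℝ → ℝ := fun x => Q (Set.projIcc 0 1 zero_le_one x) with hQcdef
  have hPcc : Continuous Pc := hPc.comp continuous_projIcc
  have hQcc : Continuous Qc := hQc.comp continuous_projIcc
  have hPmem : ∀ (x : ℝ) (hx : x ∈ Set.Icc (0:ℝ) 1), Pc x = P ⟨x, hx⟩ := by
    intro x hx
    simp only [hPcdef]
    rw [Set.projIcc_of_mem zero_le_one hx]
  have hQmem : ∀ (x : ℝ) (hx : x ∈ Set.Icc (0:ℝ) 1), Qc x = Q ⟨x, hx⟩ := by
    intro x hx
    simp only [hQcdef]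
    rw [Set.projIcc_of_mem zero_le_one hx]
  have hzero : (⟨0, by norm_num⟩ : unitInterval) = 0 := rfl
  have hone : (⟨1, by norm_num⟩ : unitInterval) = 1 := rfl
  have hPc0 : Pc 0 = P 0 := by rw [hPmem 0 (by norm_num)]; rfl
  have hPc1 : Pc 1 = P 1 := by rw [hPmem 1 (by norm_num)]; rfl
  have hQc0 : Qc 0 = Q 0 := by rw [hQmem 0 (by norm_num)]; rfl
  have hQc1 : Qc 1 = Q 1 := by rw [hQmem 1 (by norm_num)]; rfl
  have hP2 : ∀ u v, 0 ≤ u → u ≤ v → v ≤ 1 → Pc u - 2*δ ≤ Pc v := by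
    intro u v hu huv hv
    rw [hPmem u ⟨hu, le_trans huv hv⟩, hPmem v ⟨le_trans hu huv, hv⟩]
    exact hPinc _ _ (Subtype.mk_le_mk.mpr huv)
  have hQ2 : ∀ u v, 0 ≤ u → u ≤ v → v ≤ 1 → Qc u - 2*δ ≤ Qc v := by
    intro u v hu huv hv
    rw [hQmem u ⟨hu, le_trans huv hv⟩, hQmem v ⟨le_trans hu huv, hv⟩]
    exact hQinc _ _ (Subtype.mk_le_mk.mpr huv)
  have hQrc : ∀ v, 0 ≤ v → v ≤ 1 → Qc 0 ≤ Qc v ∧ Qc v ≤ Qc 1 := by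
    intro v hv0 hv1
    rw [hQmem v ⟨hv0, hv1⟩, hQc0, hQc1]
    exact hQr _
  have h0c : |Pc 0 - Qc 0| ≤ δ := by rw [hPc0, hQc0]; exact h0
  have h1c : |Pc 1 - Qc 1| ≤ δ := by rw [hPc1, hQc1]; exact h1
  have hrc : ∀ u, 0 ≤ u → u ≤ 1 → Qc 0 - δ ≤ Pc u ∧ Pc u ≤ Qc 1 + δ := by
    intro u hu0 hu1
    rw [hPmem u ⟨hu0, hu1⟩, hQc0, hQc1]
    obtain ⟨s, hs⟩ := hrange ⟨u, hu0, hu1⟩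
    rw [abs_le] at hs
    have := hQr s
    constructor <;> linarith [hs.1, hs.2, this.1, this.2]
  -- real-level reparametrizations
  set fr : ℝ → ℝ := fun x => auxpsi Pc Qc δ (2*x) with hfr
  set gr : ℝ → ℝ := fun x => 2*x - auxpsi Pc Qc δ (2*x) with hgr
  have hfrcont : Continuous fr :=
    (auxpsi_lipschitz Pc Qc δ hPcc).continuous.comp (continuous_const.mul continuous_id)
  have hgrcont : Continuous gr :=
    (continuous_const.mul continuous_id).sub hfrcont
  have hfrmono : Monotone fr := by
    intro a b hab
    exact auxpsi_mono Pc Qc δ _ _ (by linarith)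
  have hgrmono : Monotone gr := by
    intro a b hab
    have hlip := (auxpsi_lipschitz Pc Qc δ hPcc).dist_le_mul (2*a) (2*b)
    rw [Real.dist_eq, Real.dist_eq, NNReal.coe_one, one_mul] at hlip
    have h2 : |auxpsi Pc Qc δ (2*a) - auxpsi Pc Qc δ (2*b)| ≤ |2*a - 2*b| := hlip
    rw [abs_le] at h2
    have h3 : |2*a - 2*b| = 2*b - 2*a := by
      rw [abs_of_nonpos (by linarith)]; ring
    simp only [hgr]
    have := h2.1
    rw [h3] at this
    linarith
  have hfr0 : fr 0 = 0 := by simp only [hfr]; rw [mul_zero, auxpsi_zero]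
  have hfr1 : fr 1 = 1 := by simp only [hfr]; rw [mul_one, auxpsi_two]
  have hgr0 : gr 0 = 0 := by simp only [hgr]; rw [mul_zero, auxpsi_zero]; ring
  have hgr1 : gr 1 = 1 := by simp only [hgr]; rw [mul_one, auxpsi_two]; norm_num
  have hfrmem : ∀ t : unitInterval, fr t ∈ Set.Icc (0:ℝ) 1 := by
    intro t
    exact ⟨auxpsi_nonneg Pc Qc δ _, auxpsi_le_one Pc Qc δ _⟩
  have hgrmem : ∀ t : unitInterval, gr t ∈ Set.Icc (0:ℝ) 1 := by
    intro t
    have := auxpsi_v_mem Pc Qc δ (2*t) (by linarith [t.2.1]) (by linarith [t.2.2])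
    exact ⟨this.1, this.2⟩
  set f : unitInterval → unitInterval := fun t => ⟨fr t, hfrmem t⟩ with hf
  set g : unitInterval → unitInterval := fun t => ⟨gr t, hgrmem t⟩ with hg
  refine ⟨f, g, ?_, ?_, ?_, ?_, ?_, ?_, ?_⟩
  · exact Continuous.subtype_mk (hfrcont.comp continuous_subtype_val) _
  · intro a b hab
    exact Subtype.mk_le_mk.mpr (hfrmono (Subtype.coe_le_coe.mpr hab))
  · intro y
    have hIVT := intermediate_value_Icc (zero_le_one (α := ℝ)) (hfrcont.continuousOn)
    rw [hfr0, hfr1] at hIVT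
    obtain ⟨x, hx, hfx⟩ := hIVT y.2
    exact ⟨⟨x, hx⟩, Subtype.ext hfx⟩
  · exact Continuous.subtype_mk (hgrcont.comp continuous_subtype_val) _
  · intro a b hab
    exact Subtype.mk_le_mk.mpr (hgrmono (Subtype.coe_le_coe.mpr hab))
  · intro y
    have hIVT := intermediate_value_Icc (zero_le_one (α := ℝ)) (hgrcont.continuousOn)
    rw [hgr0, hgr1] at hIVT
    obtain ⟨x, hx, hgx⟩ := hIVT y.2
    exact ⟨⟨x, hx⟩, Subtype.ext hgx⟩
  · intro t
    have hb := main_bound hδ hPcc hQcc hP2 hQ2 hQrc h0c h1c hrc (2*t)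
      (by linarith [t.2.1]) (by linarith [t.2.2])
    have e1 : P (f t) = Pc (fr t) := by rw [hPmem _ (hfrmem t)]
    have e2 : Q (g t) = Qc (gr t) := by rw [hQmem _ (hgrmem t)]
    rw [e1, e2]
    exact hb

end Assemble


end FrechetAux

/-- Two `2δ`-monotone curves `P, Q` with `P` `2δ`-monotone with
respect to the segment from `Q(0)` to `Q(1)`, matching endpoints within `δ`,
`P` within distance `δ` of `Q`, and `Q` range-preserving, have `d_F(P,Q) ≤ δ`. -/
theorem frechetDist_le_of_approxMonotone (δ : ℝ) (hδ : 0 < δ)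
    (P Q : unitInterval → ℝ) (hPc : Continuous P) (hQc : Continuous Q)
    (hPm : ApproxMono (2 * δ) P) (hQm : ApproxMono (2 * δ) Q)
    (hwrt : (Q 0 ≤ Q 1 ∧ ApproxInc (2 * δ) P) ∨ (Q 1 ≤ Q 0 ∧ ApproxDec (2 * δ) P))
    (h0 : |P 0 - Q 0| ≤ δ) (h1 : |P 1 - Q 1| ≤ δ)
    (hrange : ∀ t : unitInterval, ∃ s : unitInterval, |P t - Q s| ≤ δ)
    (hQrange : ∀ t : unitInterval, Q t ∈ Set.uIcc (Q 0) (Q 1)) :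
    frechetDist P Q ≤ δ := by
  have hkey : ∃ f g : unitInterval → unitInterval,
      Continuous f ∧ Monotone f ∧ Function.Surjective f ∧
      Continuous g ∧ Monotone g ∧ Function.Surjective g ∧
      ∀ t, |P (f t) - Q (g t)| ≤ δ := by
    rcases hwrt with ⟨hq01, hinc⟩ | ⟨hq10, hdec⟩
    · -- increasing case
      have hQr : ∀ v : unitInterval, Q 0 ≤ Q v ∧ Q v ≤ Q 1 := by
        intro v
        have := hQrange v
        rw [Set.uIcc_of_le hq01] at this
        exact ⟨this.1, this.2⟩
      have hQinc : ∀ s t : unitInterval, s ≤ t → Q s - 2*δ ≤ Q t := by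
        rcases hQm with hQi | hQd
        · intro s t hst; have := hQi s t hst; linarith
        · intro s t hst
          have ht0 : Q 0 ≤ Q t := (hQr t).1
          have hs1 : Q s ≤ Q 1 := (hQr s).2
          have := hQd 0 1 (by exact Subtype.mk_le_mk.mpr zero_le_one)
          linarith
      have hPinc : ∀ s t : unitInterval, s ≤ t → P s - 2*δ ≤ P t := by
        intro s t hst; have := hinc s t hst; linarith
      exact exists_matching δ hδ P Q hPc hQc hPinc hQinc hQr h0 h1 hrange
    · -- decreasing case : negate
      set P' : unitInterval → ℝ := fun t => -(P t) with hP'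
      set Q' : unitInterval → ℝ := fun t => -(Q t) with hQ'
      have hQr : ∀ v : unitInterval, Q' 0 ≤ Q' v ∧ Q' v ≤ Q' 1 := by
        intro v
        have := hQrange v
        rw [Set.uIcc_of_ge hq10] at this
        simp only [hQ']
        constructor <;> linarith [this.1, this.2]
      have hQinc : ∀ s t : unitInterval, s ≤ t → Q' s - 2*δ ≤ Q' t := by
        rcases hQm with hQi | hQd
        · intro s t hst
          have ht0 : Q' 0 ≤ Q' t := (hQr t).1
          have hs1 : Q' s ≤ Q' 1 := (hQr s).2
          have := hQi 0 1 (by exact Subtype.mk_le_mk.mpr zero_le_one)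
          simp only [hQ'] at *
          linarith
        · intro s t hst
          have := hQd s t hst
          simp only [hQ']
          linarith
      have hPinc : ∀ s t : unitInterval, s ≤ t → P' s - 2*δ ≤ P' t := by
        intro s t hst
        have := hdec s t hst
        simp only [hP']
        linarith
      have h0' : |P' 0 - Q' 0| ≤ δ := by
        simp only [hP', hQ']
        rw [show -P 0 - -Q 0 = -(P 0 - Q 0) by ring, abs_neg]
        exact h0
      have h1' : |P' 1 - Q' 1| ≤ δ := by
        simp only [hP', hQ']
        rw [show -P 1 - -Q 1 = -(P 1 - Q 1) by ring, abs_neg]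
        exact h1
      have hrange' : ∀ t : unitInterval, ∃ s : unitInterval, |P' t - Q' s| ≤ δ := by
        intro t
        obtain ⟨s, hs⟩ := hrange t
        refine ⟨s, ?_⟩
        simp only [hP', hQ']
        rw [show -P t - -Q s = -(P t - Q s) by ring, abs_neg]
        exact hs
      obtain ⟨f, g, hfc, hfm, hfs, hgc, hgm, hgs, hb⟩ :=
        exists_matching δ hδ P' Q' hPc.neg hQc.neg hPinc hQinc hQr h0' h1' hrange'
      refine ⟨f, g, hfc, hfm, hfs, hgc, hgm, hgs, fun t => ?_⟩
      have := hb t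
      simp only [hP', hQ'] at this
      rw [show -P (f t) - -Q (g t) = -(P (f t) - Q (g t)) by ring, abs_neg] at this
      exact this
  obtain ⟨f, g, hfc, hfm, hfs, hgc, hgm, hgs, hb⟩ := hkey
  unfold frechetDist
  apply csInf_le
  · refine ⟨0, ?_⟩
    rintro r ⟨f', g', _, _, _, _, _, _, hd⟩
    exact le_trans dist_nonneg (hd 0)
  · exact ⟨f, g, hfc, hfm, hfs, hgc, hgm, hgs, fun t => by
      rw [Real.dist_eq]; exact hb t⟩
end
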